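/- arXiv:2001.01875 — 2 statements merged into one kernel-verified Lean document; each statement's English description precedes it below -/
import Mathlib

section
/- Every Eulerian poset of positive rank is near-Eulerian. Concretely, if P is an Eulerian poset of rank n > 0, then Q := Σ̃P ∪ {1̂}, obtained by adjoining to P a new element q of rank n with ∂P < q and then a maximal element, is an Eulerian poset of rank n+1 with P = Q ∖ {q, 1̂}. -/
open scoped Classical

noncomputable section

namespace CDIndex

variable {α β : Type}

/-- The natural rank function of a graded poset: `rho x` is one less than the largest
cardinality of a chain contained in `Set.Iic x` (i.e. the length of a maximal chain of
the interval `[0̂, x]`). -/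
def rho [PartialOrder α] (x : α) : ℕ :=
  sSup {k : ℕ | ∃ s : Finset α,
    IsChain (· ≤ ·) (s : Set α) ∧ (s : Set α) ⊆ Set.Iic x ∧ s.card = k + 1}

/-- A subset `S` of a poset is graded of rank `n` if every maximal chain of `S`
has exactly `n + 1` elements (i.e. length `n`). -/
def IsGradedSetOfRank [PartialOrder α] (S : Set α) (n : ℕ) : Prop :=
  ∀ s : Finset α, (s : Set α) ⊆ S → IsChain (· ≤ ·) (s : Set α) →
    (∀ t : Finset α, (t : Set α) ⊆ S → IsChain (· ≤ ·) (t : Set α) → s ⊆ t → s = t) →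
    s.card = n + 1

/-- A poset is graded of rank `n` if every maximal chain has length `n`. -/
def IsGradedOfRank (α : Type) [PartialOrder α] (n : ℕ) : Prop :=
  IsGradedSetOfRank (Set.univ : Set α) n

/-- Every interval `[s, t]` with `s < t`, `s, t ∈ S`, has equally many elements of even
rank and of odd rank. -/
def BalancedIntervalsIn [PartialOrder α] (S : Set α) : Prop :=
  ∀ s ∈ S, ∀ t ∈ S, s < t →
    {y ∈ Set.Icc s t | Even (rho y)}.ncard = {y ∈ Set.Icc s t | Odd (rho y)}.ncard

/-- An Eulerian poset of rank `n`: a graded poset with `0̂` and `1̂` in which every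
interval of positive length has equally many elements of each parity of rank. -/
def IsEulerianOfRank (α : Type) [PartialOrder α] (n : ℕ) : Prop :=
  (∃ b : α, ∀ z, b ≤ z) ∧ (∃ t : α, ∀ z, z ≤ t) ∧
    IsGradedOfRank α n ∧ BalancedIntervalsIn (Set.univ : Set α)

/-- A lower Eulerian poset of rank `n`: a graded poset with `0̂` all of whose intervals
are Eulerian. -/
def IsLowerEulerianOfRank (α : Type) [PartialOrder α] (n : ℕ) : Prop :=
  (∃ b : α, ∀ z, b ≤ z) ∧ IsGradedOfRank α n ∧ BalancedIntervalsIn (Set.univ : Set α)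

/-- A lower order ideal `S` (of a poset) which is lower Eulerian of rank `n`. -/
def IsLowerEulerianSetOfRank [PartialOrder α] (S : Set α) (n : ℕ) : Prop :=
  IsGradedSetOfRank S n ∧ BalancedIntervalsIn S

/-- The boundary of (a lower order ideal `S` of) a graded poset of rank `n`: the lower
order ideal generated by the rank `n - 1` elements which are covered by exactly one
element. -/
def boundaryIn [PartialOrder α] (S : Set α) (n : ℕ) : Set α :=
  {y | y ∈ S ∧ ∃ x ∈ S, rho x = n - 1 ∧ {z ∈ S | x ⋖ z}.ncard = 1 ∧ y ≤ x}

/-- The boundary `∂P` of a graded poset of rank `n`. -/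
def boundary (α : Type) [PartialOrder α] (n : ℕ) : Set α :=
  boundaryIn (Set.univ : Set α) n

/-- `α` is a near-Eulerian poset of rank `n`: it is obtained from an Eulerian poset `Q`
of rank `n + 1` by removing the maximal element and one element `q` of rank `n`. -/
def IsNearEulerianOfRank (α : Type) [PartialOrder α] [Finite α] (n : ℕ) : Prop :=
  ∃ (Q : Type) (_ : PartialOrder Q) (_ : Finite Q) (q top : Q),
    IsEulerianOfRank Q (n + 1) ∧ (∀ z, z ≤ top) ∧ rho q = n ∧ q ≠ top ∧
    Nonempty (α ≃o {x : Q // x ≠ q ∧ x ≠ top})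

/-- `α` is (isomorphic to) the boundary of an Eulerian poset, where `α` has rank `n`
(so the Eulerian poset has rank `n + 1`). -/
def IsBoundaryOfEulerianOfRank (α : Type) [PartialOrder α] [Finite α] (n : ℕ) : Prop :=
  ∃ (Q : Type) (_ : PartialOrder Q) (_ : Finite Q) (top : Q),
    IsEulerianOfRank Q (n + 1) ∧ (∀ z, z ≤ top) ∧
    Nonempty (α ≃o {x : Q // x ≠ top})

/-! ### The semisuspension -/

/-- The semisuspension of `α` relative to a set `S` (intended: `S = ∂α`): the poset `α`
together with one new element `q` lying above `0̂` and above every element of `S`. -/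
@[ext] structure Semisusp (α : Type) (S : Set α) : Type where
  toOpt : Option α

namespace Semisusp

variable {S : Set α}

/-- The new vertex `q` of the semisuspension. -/
def q : Semisusp α S := ⟨none⟩

/-- The inclusion of `α` into its semisuspension. -/
def incl (a : α) : Semisusp α S := ⟨some a⟩

instance instPartialOrder [PartialOrder α] [OrderBot α] : PartialOrder (Semisusp α S) where
  le x y := match x, y with
    | ⟨some a⟩, ⟨some b⟩ => a ≤ b
    | ⟨some a⟩, ⟨none⟩ => a = ⊥ ∨ ∃ s ∈ S, a ≤ s
    | ⟨none⟩, ⟨some _⟩ => False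
    | ⟨none⟩, ⟨none⟩ => True
  le_refl x := by rcases x with ⟨_ | a⟩ <;> simp
  le_trans x y z hxy hyz := by
    rcases x with ⟨_ | a⟩ <;> rcases y with ⟨_ | b⟩ <;> rcases z with ⟨_ | c⟩ <;>
      simp_all
    · rcases hyz with h | ⟨s, hs, hbs⟩
      · subst h
        exact Or.inl (le_bot_iff.mp hxy)
      · exact Or.inr ⟨s, hs, le_trans hxy hbs⟩
    · exact le_trans hxy hyz
  le_antisymm x y hxy hyx := by
    rcases x with ⟨_ | a⟩ <;> rcases y with ⟨_ | b⟩ <;> simp_all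
    exact le_antisymm hxy hyx

instance [PartialOrder α] [OrderBot α] : OrderBot (Semisusp α S) where
  bot := ⟨some ⊥⟩
  bot_le x := by
    rcases x with ⟨_ | a⟩
    · exact Or.inl rfl
    · show (⊥ : α) ≤ a
      exact bot_le

def equivOption : Semisusp α S ≃ Option α where
  toFun := toOpt
  invFun := mk
  left_inv _ := rfl
  right_inv _ := rfl

instance [Finite α] : Finite (Semisusp α S) := by
  have := Fintype.ofFinite α
  exact Finite.of_equiv (Option α) (equivOption (S := S)).symm

end Semisusp
section General
variable [PartialOrder α] [Finite α]

lemma exists_max_chain (s : Finset α) (hs : IsChain (· ≤ ·) (s : Set α)) :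
    ∃ t : Finset α, IsChain (· ≤ ·) (t : Set α) ∧ s ⊆ t ∧
      ∀ u : Finset α, IsChain (· ≤ ·) (u : Set α) → t ⊆ u → t = u := by
  have := Fintype.ofFinite α
  classical
  obtain ⟨t, ht, htmax⟩ := Finset.exists_max_image
    ((Finset.univ : Finset (Finset α)).filter
      fun t : Finset α => IsChain (· ≤ ·) (t : Set α) ∧ s ⊆ t) Finset.card
    ⟨s, by simp [hs]⟩
  simp only [Finset.mem_filter, Finset.mem_univ, true_and] at ht htmax
  refine ⟨t, ht.1, ht.2, fun u hu htu => ?_⟩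
  exact Finset.eq_of_subset_of_card_le htu (htmax u ⟨hu, ht.2.trans htu⟩)

lemma chain_card_le {n : ℕ} (hg : IsGradedOfRank α n) (s : Finset α)
    (hs : IsChain (· ≤ ·) (s : Set α)) : s.card ≤ n + 1 := by
  obtain ⟨t, ht, hst, hmax⟩ := exists_max_chain s hs
  have := hg t (Set.subset_univ _) ht (fun u _ hu htu => hmax u hu htu)
  calc s.card ≤ t.card := Finset.card_le_card hst
    _ = n + 1 := this

omit [Finite α] in
lemma rho_eq_of {x : α} {m : ℕ}
    (h1 : ∃ s : Finset α, IsChain (· ≤ ·) (s : Set α) ∧ (s : Set α) ⊆ Set.Iic x ∧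
      s.card = m + 1)
    (h2 : ∀ s : Finset α, IsChain (· ≤ ·) (s : Set α) → (s : Set α) ⊆ Set.Iic x →
      s.card ≤ m + 1) :
    rho x = m := by
  unfold rho
  apply le_antisymm
  · refine csSup_le' fun k hk => ?_
    obtain ⟨s, hc, hsub, hcard⟩ := hk
    have := h2 s hc hsub
    omega
  · refine le_csSup ⟨m, fun k hk => ?_⟩ ?_
    · obtain ⟨s, hc, hsub, hcard⟩ := hk
      have := h2 s hc hsub
      omega
    · exact h1

omit [Finite α] in
lemma rho_congr [PartialOrder β] (e : α ↪o β) (x : α)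
    (h : Set.Iic (e x) ⊆ Set.range e) : rho (e x) = rho x := by
  unfold rho
  congr 1
  ext k
  constructor
  · rintro ⟨t, hc, hsub, hcard⟩
    classical
    have hinj : Set.InjOn e (e ⁻¹' ↑t) := e.injective.injOn
    refine ⟨t.preimage e hinj, ?_, ?_, ?_⟩
    · intro a ha b hb hab
      simp only [Finset.coe_preimage, Set.mem_preimage] at ha hb
      rcases hc ha hb (fun hh => hab (e.injective hh)) with h' | h'
      · exact Or.inl (e.le_iff_le.mp h')
      · exact Or.inr (e.le_iff_le.mp h')
    · intro a ha
      simp only [Finset.coe_preimage, Set.mem_preimage] at ha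
      exact e.le_iff_le.mp (hsub ha)
    · rw [← hcard]
      rw [Finset.card_preimage]
      congr 1
      apply Finset.filter_true_of_mem
      intro b hb
      exact h (hsub hb)
  · rintro ⟨s, hc, hsub, hcard⟩
    classical
    refine ⟨s.image e, ?_, ?_, ?_⟩
    · rw [Finset.coe_image]
      exact hc.image_of_map_rel _ _ _ (fun _ _ hh => e.monotone hh)
    · intro b hb
      simp only [Finset.coe_image, Set.mem_image] at hb
      obtain ⟨a, ha, rfl⟩ := hb
      exact e.monotone (hsub ha)
    · rw [Finset.card_image_of_injective _ e.injective, hcard]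

end General

section Alpha
variable [PartialOrder α] [Finite α] {n : ℕ} {t₀ : α}

lemma rho_top (htop : ∀ z, z ≤ t₀) (hg : IsGradedOfRank α n) : rho t₀ = n := by
  obtain ⟨t, ht, -, hmax⟩ := exists_max_chain (∅ : Finset α) (by simp)
  refine rho_eq_of ⟨t, ht, fun a _ => htop a, ?_⟩ (fun s hs _ => chain_card_le hg s hs)
  exact hg t (Set.subset_univ _) ht (fun u _ hu htu => hmax u hu htu)

lemma bot_ne_top [OrderBot α] (hn : 0 < n) (htop : ∀ z, z ≤ t₀)
    (hg : IsGradedOfRank α n) : (⊥ : α) ≠ t₀ := by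
  intro hbt
  have hall : ∀ z : α, z = ⊥ := fun z => le_antisymm (hbt ▸ htop z) bot_le
  obtain ⟨t, ht, -, hmax⟩ := exists_max_chain (∅ : Finset α) (by simp)
  have hcard := hg t (Set.subset_univ _) ht (fun u _ hu htu => hmax u hu htu)
  have : t.card ≤ 1 := Finset.card_le_one.mpr (fun a _ b _ => (hall a).trans (hall b).symm)
  omega

lemma chain_card_le_of_not_top (htop : ∀ z, z ≤ t₀) (hg : IsGradedOfRank α n)
    (d : Finset α) (hd : IsChain (· ≤ ·) (d : Set α)) (ht : t₀ ∉ d) : d.card ≤ n := by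
  classical
  have hc : IsChain (· ≤ ·) ((insert t₀ d : Finset α) : Set α) := by
    rw [Finset.coe_insert]
    refine hd.insert (fun b _ _ => Or.inr (htop b))
  have := chain_card_le hg _ hc
  rw [Finset.card_insert_of_notMem ht] at this
  omega

lemma boundary_eq (hn : 0 < n) (htop : ∀ z, z ≤ t₀) (hg : IsGradedOfRank α n) :
    boundary α n = {y : α | y ≠ t₀} := by
  ext y
  simp only [boundary, boundaryIn, Set.mem_univ, true_and, Set.mem_setOf_eq]
  constructor
  · rintro ⟨x, hx, -, hyx⟩ rfl
    have : x = y := le_antisymm (htop x) hyx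
    subst this
    rw [rho_top htop hg] at hx
    omega
  · intro hy
    -- extend {y, t₀} to a maximal chain
    have hych : IsChain (· ≤ ·) (({y, t₀} : Finset α) : Set α) := by
      rw [Finset.coe_insert, Finset.coe_singleton]
      exact IsChain.insert (Set.Subsingleton.isChain (Set.subsingleton_singleton))
        (fun b hb _ => Or.inl (hb ▸ htop y))
    obtain ⟨c, hc, hsub, hmax⟩ := exists_max_chain _ hych
    have hyc : y ∈ c := hsub (by simp)
    have htc : t₀ ∈ c := hsub (by simp)
    have hcard := hg c (Set.subset_univ _) hc (fun u _ hu hcu => hmax u hu hcu)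
    classical
    obtain ⟨x, hxe, hxmax⟩ := (c.erase t₀).exists_maximal ⟨y, Finset.mem_erase.mpr ⟨hy, hyc⟩⟩
    obtain ⟨hxt, hxc⟩ := Finset.mem_erase.mp hxe
    -- every non-top element of c is ≤ x
    have hle : ∀ a ∈ c, a ≠ t₀ → a ≤ x := by
      intro a hac hat
      rcases eq_or_ne a x with rfl | hax
      · exact le_rfl
      rcases hc hac hxc hax with h' | h'
      · exact h'
      · exact absurd (lt_of_le_of_ne h' (Ne.symm hax)) (fun hlt => hlt.not_ge (hxmax (Finset.mem_erase.mpr ⟨hat, hac⟩) h'))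
    have hxlt : x < t₀ := lt_of_le_of_ne (htop x) hxt
    -- nothing strictly between x and t₀
    have hbetween : ∀ w, x < w → w < t₀ → False := by
      intro w hxw hwt
      have hwc : w ∉ c := by
        intro hwc
        exact absurd (hle w hwc hwt.ne) (not_le_of_gt hxw)
      have hch : IsChain (· ≤ ·) ((insert w c : Finset α) : Set α) := by
        rw [Finset.coe_insert]
        refine hc.insert (fun b hb _ => ?_)
        rcases eq_or_ne b t₀ with rfl | hbt
        · exact Or.inl hwt.le
        · exact Or.inr ((hle b hb hbt).trans hxw.le)
      have := hmax _ hch (Finset.subset_insert w c)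
      exact hwc (this ▸ Finset.mem_insert_self w c)
    refine ⟨x, ?_, ?_, hle y hyc hy⟩
    · -- rho x = n - 1
      have h1 : ((c.erase t₀ : Finset α) : Set α) ⊆ Set.Iic x := by
        intro a ha
        rw [Finset.coe_erase] at ha
        exact hle a ha.1 ha.2
      have hcard' : (c.erase t₀).card = (n - 1) + 1 := by
        rw [Finset.card_erase_of_mem htc]; omega
      refine rho_eq_of ⟨c.erase t₀, hc.mono (by simp [Finset.coe_erase]), h1, hcard'⟩ ?_
      intro d hd hdx
      have htd : t₀ ∉ d := by
        intro htd
        have : t₀ ≤ x := hdx htd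
        exact absurd (le_antisymm (htop x) this) hxt
      have := chain_card_le_of_not_top htop hg d hd htd
      omega
    · -- the set of covers of x is {t₀}
      have hset : {z : α | x ⋖ z} = {t₀} := by
        ext z
        simp only [Set.mem_setOf_eq, Set.mem_singleton_iff]
        constructor
        · rintro ⟨hxz, -⟩
          by_contra hzt
          exact hbetween z hxz (lt_of_le_of_ne (htop z) hzt)
        · rintro rfl
          exact ⟨hxlt, fun w hw hw' => hbetween w hw hw'⟩
      rw [hset, Set.ncard_singleton]

end Alpha

section QBasic
variable [PartialOrder α] [OrderBot α]

/-- The ambient poset `Q = Σ̃α ∪ {1̂}`. -/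
abbrev QQ (α : Type) [PartialOrder α] (n : ℕ) : Type :=
  WithTop (Semisusp α (boundary α n))

/-- The inclusion of `α` into `Q`, as an order embedding. -/
def eQ (α : Type) [PartialOrder α] [OrderBot α] (n : ℕ) : α ↪o QQ α n where
  toFun a := ((Semisusp.incl a : Semisusp α (boundary α n)) : QQ α n)
  inj' a b hab := by
    have h1 : (Semisusp.incl a : Semisusp α (boundary α n)) = Semisusp.incl b :=
      WithTop.coe_injective hab
    simpa [Semisusp.incl, Semisusp.mk.injEq] using h1
  map_rel_iff' := by
    intro a b
    show ((Semisusp.incl a : Semisusp α (boundary α n)) : QQ α n) ≤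
      ((Semisusp.incl b : Semisusp α (boundary α n)) : QQ α n) ↔ a ≤ b
    rw [WithTop.coe_le_coe]
    exact Iff.rfl

variable {n : ℕ}

lemma eQ_le_eQ {a b : α} : eQ α n a ≤ eQ α n b ↔ a ≤ b := (eQ α n).le_iff_le

lemma incl_le_q_iff {a : α} :
    (Semisusp.incl a : Semisusp α (boundary α n)) ≤ Semisusp.q ↔
      a = ⊥ ∨ ∃ s ∈ boundary α n, a ≤ s := Iff.rfl

lemma not_q_le_incl {a : α} :
    ¬ ((Semisusp.q : Semisusp α (boundary α n)) ≤ Semisusp.incl a) := fun h => h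

lemma eQ_le_qQ_iff {a : α} :
    eQ α n a ≤ ((Semisusp.q : Semisusp α (boundary α n)) : QQ α n) ↔
      a = ⊥ ∨ ∃ s ∈ boundary α n, a ≤ s := by
  rw [show eQ α n a = ((Semisusp.incl a : Semisusp α (boundary α n)) : QQ α n) from rfl,
    WithTop.coe_le_coe]
  exact Iff.rfl

lemma not_qQ_le_eQ {a : α} :
    ¬ (((Semisusp.q : Semisusp α (boundary α n)) : QQ α n) ≤ eQ α n a) := by
  rw [show eQ α n a = ((Semisusp.incl a : Semisusp α (boundary α n)) : QQ α n) from rfl,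
    WithTop.coe_le_coe]
  exact not_q_le_incl

lemma eQ_ne_qQ {a : α} :
    eQ α n a ≠ ((Semisusp.q : Semisusp α (boundary α n)) : QQ α n) := by
  intro hh
  have := WithTop.coe_injective hh
  simp [Semisusp.incl, Semisusp.q, Semisusp.mk.injEq] at this

lemma eQ_ne_top {a : α} : eQ α n a ≠ (⊤ : QQ α n) := WithTop.coe_ne_top

lemma qQ_ne_top : ((Semisusp.q : Semisusp α (boundary α n)) : QQ α n) ≠ ⊤ :=
  WithTop.coe_ne_top

/-- Case analysis on elements of `Q`. -/
lemma QQ_cases (x : QQ α n) :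
    x = ⊤ ∨ x = ((Semisusp.q : Semisusp α (boundary α n)) : QQ α n) ∨
      ∃ a : α, x = eQ α n a := by
  rcases x with _ | ⟨_ | a⟩
  · exact Or.inl rfl
  · exact Or.inr (Or.inl rfl)
  · exact Or.inr (Or.inr ⟨a, rfl⟩)

lemma iic_eQ_subset_range {a : α} : Set.Iic (eQ α n a) ⊆ Set.range (eQ α n) := by
  intro y hy
  rcases QQ_cases y with rfl | rfl | ⟨b, rfl⟩
  · exact absurd hy (by simp [Set.mem_Iic, top_le_iff, eQ_ne_top (a := a)])
  · exact absurd hy (not_qQ_le_eQ)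
  · exact ⟨b, rfl⟩

lemma rho_eQ [Finite α] {a : α} : rho (eQ α n a) = rho a :=
  rho_congr (eQ α n) a iic_eQ_subset_range

end QBasic

section QMain
variable [PartialOrder α] [OrderBot α] [Finite α] {n : ℕ} {t₀ : α}

/-- The vertex `q` as an element of `Q`. -/
abbrev qQ (α : Type) [PartialOrder α] (n : ℕ) : QQ α n :=
  ((Semisusp.q : Semisusp α (boundary α n)) : QQ α n)

omit [Finite α] in
lemma chain_preimage {β : Type} [PartialOrder β] (e : α ↪o β) (t : Finset β)
    (ht : IsChain (· ≤ ·) (t : Set β)) (hsub : (t : Set β) ⊆ Set.range e) :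
    ∃ s : Finset α, IsChain (· ≤ ·) (s : Set α) ∧ (∀ a, a ∈ s ↔ e a ∈ t) ∧
      s.card = t.card := by
  classical
  have hinj : Set.InjOn e (e ⁻¹' ↑t) := e.injective.injOn
  refine ⟨t.preimage e hinj, ?_, fun a => Finset.mem_preimage, ?_⟩
  · intro a ha b hb hab
    simp only [Finset.coe_preimage, Set.mem_preimage] at ha hb
    rcases ht ha hb (fun hh => hab (e.injective hh)) with h' | h'
    · exact Or.inl (e.le_iff_le.mp h')
    · exact Or.inr (e.le_iff_le.mp h')
  · rw [Finset.card_preimage, Finset.filter_true_of_mem (fun b hb => hsub hb)]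

lemma eQ_le_qQ_iff' (hn : 0 < n) (htop : ∀ z, z ≤ t₀) (hg : IsGradedOfRank α n)
    {a : α} : eQ α n a ≤ qQ α n ↔ a ≠ t₀ := by
  rw [eQ_le_qQ_iff, boundary_eq hn htop hg]
  constructor
  · rintro (rfl | ⟨s, hs, has⟩)
    · exact bot_ne_top hn htop hg
    · exact fun hh => hs (le_antisymm (htop s) (hh ▸ has))
  · intro ha
    exact Or.inr ⟨a, ha, le_rfl⟩

lemma not_top_le_qQ : ¬ ((⊤ : QQ α n) ≤ qQ α n) := WithTop.not_top_le_coe _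

lemma eQ_t0_notMem (hn : 0 < n) (htop : ∀ z, z ≤ t₀) (hg : IsGradedOfRank α n)
    {c : Finset (QQ α n)} (hc : IsChain (· ≤ ·) (c : Set (QQ α n)))
    (hq : qQ α n ∈ c) : eQ α n t₀ ∉ c := by
  intro hmem
  rcases hc hmem hq eQ_ne_qQ with h' | h'
  · exact ((eQ_le_qQ_iff' hn htop hg).mp h') rfl
  · exact not_qQ_le_eQ h'

lemma chain_card_le_Q (hn : 0 < n) (htop : ∀ z, z ≤ t₀) (hg : IsGradedOfRank α n)
    (c : Finset (QQ α n)) (hc : IsChain (· ≤ ·) (c : Set (QQ α n))) :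
    c.card ≤ n + 2 := by
  classical
  set c₂ := (c.erase ⊤).erase (qQ α n) with hc₂
  have hc₂sub : c₂ ⊆ c := (Finset.erase_subset _ _).trans (Finset.erase_subset _ _)
  have hsub : (c₂ : Set (QQ α n)) ⊆ Set.range (eQ α n) := by
    intro x hx
    have hx' := Finset.mem_coe.mp hx
    have hxq : x ≠ qQ α n := (Finset.mem_erase.mp hx').1
    have hxt : x ≠ ⊤ := (Finset.mem_erase.mp (Finset.mem_erase.mp hx').2).1
    rcases QQ_cases x with rfl | rfl | ⟨a, rfl⟩
    · exact absurd rfl hxt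
    · exact absurd rfl hxq
    · exact ⟨a, rfl⟩
  obtain ⟨d, hd, hmem, hcard⟩ := chain_preimage (eQ α n) c₂
    (hc.mono (by exact_mod_cast hc₂sub)) hsub
  have hcard2 : c.card ≤ c₂.card + 2 := by
    have h1 := Finset.pred_card_le_card_erase (s := c) (a := ⊤)
    have h2 := Finset.pred_card_le_card_erase (s := c.erase ⊤) (a := qQ α n)
    rw [← hc₂] at h2
    omega
  by_cases hq : qQ α n ∈ c
  · have ht₀ : t₀ ∉ d := by
      intro hmem'
      exact eQ_t0_notMem hn htop hg hc hq (hc₂sub ((hmem t₀).mp hmem'))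
    have := chain_card_le_of_not_top htop hg d hd ht₀
    omega
  · have hce : c₂ = c.erase ⊤ := by
      rw [hc₂]
      exact Finset.erase_eq_of_notMem (fun hh => hq (Finset.mem_erase.mp hh).2)
    have hdn := chain_card_le hg d hd
    have h1 := Finset.pred_card_le_card_erase (s := c) (a := ⊤)
    rw [hce] at hcard
    omega

lemma rho_qQ (hn : 0 < n) (htop : ∀ z, z ≤ t₀) (hg : IsGradedOfRank α n) :
    rho (qQ α n) = n := by
  classical
  apply rho_eq_of
  · -- a chain of length n+1 below q
    have hch : IsChain (· ≤ ·) (({t₀} : Finset α) : Set α) := by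
      intro a ha b hb hab
      rw [Finset.coe_singleton, Set.mem_singleton_iff] at ha hb
      exact absurd (ha.trans hb.symm) hab
    obtain ⟨c, hc, hsubc, hmaxc⟩ := exists_max_chain {t₀} hch
    have htc : t₀ ∈ c := hsubc (Finset.mem_singleton_self t₀)
    have hcard := hg c (Set.subset_univ _) hc (fun u _ hu hcu => hmaxc u hu hcu)
    refine ⟨insert (qQ α n) ((c.erase t₀).image (eQ α n)), ?_, ?_, ?_⟩
    · rw [Finset.coe_insert]
      refine IsChain.insert ?_ ?_
      · rw [Finset.coe_image]
        exact (hc.mono (by exact_mod_cast Finset.erase_subset t₀ c)).image_of_map_rel _ _ _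
          (fun _ _ hh => (eQ α n).monotone hh)
      · intro b hb _
        rw [Finset.coe_image, Set.mem_image] at hb
        obtain ⟨a, ha, rfl⟩ := hb
        exact Or.inr ((eQ_le_qQ_iff' hn htop hg).mpr (Finset.mem_erase.mp ha).1)
    · intro x hx
      rw [Finset.coe_insert, Set.mem_insert_iff] at hx
      rcases hx with rfl | hx
      · exact Set.mem_Iic.mpr le_rfl
      · rw [Finset.coe_image, Set.mem_image] at hx
        obtain ⟨a, ha, rfl⟩ := hx
        exact Set.mem_Iic.mpr ((eQ_le_qQ_iff' hn htop hg).mpr (Finset.mem_erase.mp ha).1)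
    · have hnm : qQ α n ∉ (c.erase t₀).image (eQ α n) := by
        intro hh
        rw [Finset.mem_image] at hh
        obtain ⟨a, -, ha⟩ := hh
        exact eQ_ne_qQ ha
      rw [Finset.card_insert_of_notMem hnm, Finset.card_image_of_injective _
        (eQ α n).injective, Finset.card_erase_of_mem htc, hcard]
      omega
  · -- every chain below q has at most n+1 elements
    intro s hs hsub
    have htop' : (⊤ : QQ α n) ∉ s := fun hh => not_top_le_qQ (hsub hh)
    have hq' : (s.erase (qQ α n) : Set (QQ α n)) ⊆ Set.range (eQ α n) := by
      intro x hx
      have hx' := Finset.mem_coe.mp hx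
      rcases QQ_cases x with rfl | rfl | ⟨a, rfl⟩
      · exact absurd (Finset.mem_erase.mp hx').2 htop'
      · exact absurd rfl (Finset.mem_erase.mp hx').1
      · exact ⟨a, rfl⟩
    obtain ⟨d, hd, hmem, hcard⟩ := chain_preimage (eQ α n) (s.erase (qQ α n))
      (hs.mono (by exact_mod_cast Finset.erase_subset _ _)) hq'
    have ht₀ : t₀ ∉ d := by
      intro hmem'
      have h1 : eQ α n t₀ ∈ s.erase (qQ α n) := (hmem t₀).mp hmem'
      have h2 : eQ α n t₀ ≤ qQ α n := hsub (Finset.mem_coe.mpr (Finset.mem_erase.mp h1).2)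
      exact ((eQ_le_qQ_iff' hn htop hg).mp h2) rfl
    have := chain_card_le_of_not_top htop hg d hd ht₀
    have h1 := Finset.pred_card_le_card_erase (s := s) (a := qQ α n)
    omega

lemma rho_topQ (hn : 0 < n) (htop : ∀ z, z ≤ t₀) (hg : IsGradedOfRank α n) :
    rho (⊤ : QQ α n) = n + 1 := by
  classical
  apply rho_eq_of
  · obtain ⟨c, hc, -, hmaxc⟩ := exists_max_chain (∅ : Finset α) (by simp)
    have hcard := hg c (Set.subset_univ _) hc (fun u _ hu hcu => hmaxc u hu hcu)
    refine ⟨insert ⊤ (c.image (eQ α n)), ?_, fun x _ => Set.mem_Iic.mpr le_top, ?_⟩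
    · rw [Finset.coe_insert]
      refine IsChain.insert ?_ (fun b _ _ => Or.inr le_top)
      rw [Finset.coe_image]
      exact hc.image_of_map_rel _ _ _ (fun _ _ hh => (eQ α n).monotone hh)
    · have hnm : (⊤ : QQ α n) ∉ c.image (eQ α n) := by
        intro hh
        rw [Finset.mem_image] at hh
        obtain ⟨a, -, ha⟩ := hh
        exact eQ_ne_top ha
      rw [Finset.card_insert_of_notMem hnm, Finset.card_image_of_injective _
        (eQ α n).injective, hcard]
  · intro s hs _
    exact chain_card_le_Q hn htop hg s hs

lemma gradedQ (hn : 0 < n) (htop : ∀ z, z ≤ t₀) (hg : IsGradedOfRank α n) :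
    IsGradedOfRank (QQ α n) (n + 1) := by
  classical
  intro c _ hc hmax
  have hmax' : ∀ u : Finset (QQ α n), IsChain (· ≤ ·) (u : Set (QQ α n)) → c ⊆ u →
      c = u := fun u hu hcu => hmax u (Set.subset_univ _) hu hcu
  have htopc : (⊤ : QQ α n) ∈ c := by
    have hch : IsChain (· ≤ ·) ((insert ⊤ c : Finset (QQ α n)) : Set (QQ α n)) := by
      rw [Finset.coe_insert]
      exact hc.insert (fun b _ _ => Or.inr le_top)
    have := hmax' _ hch (Finset.subset_insert _ _)
    rw [this]
    exact Finset.mem_insert_self _ _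
  by_cases hq : qQ α n ∈ c
  · -- case q ∈ c
    have ht₀c : eQ α n t₀ ∉ c := eQ_t0_notMem hn htop hg hc hq
    set c₂ := (c.erase ⊤).erase (qQ α n) with hc₂def
    have hc₂sub : c₂ ⊆ c := (Finset.erase_subset _ _).trans (Finset.erase_subset _ _)
    have hsub : (c₂ : Set (QQ α n)) ⊆ Set.range (eQ α n) := by
      intro x hx
      have hx' := Finset.mem_coe.mp hx
      rcases QQ_cases x with rfl | rfl | ⟨a, rfl⟩
      · exact absurd (Finset.mem_erase.mp (Finset.mem_erase.mp hx').2).1 (fun hh => hh rfl)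
      · exact absurd (Finset.mem_erase.mp hx').1 (fun hh => hh rfl)
      · exact ⟨a, rfl⟩
    obtain ⟨d, hd, hmem, hcard⟩ := chain_preimage (eQ α n) c₂
      (hc.mono (by exact_mod_cast hc₂sub)) hsub
    have ht₀d : t₀ ∉ d := fun hh => ht₀c (hc₂sub ((hmem t₀).mp hh))
    have hcc : c.card = d.card + 2 := by
      have h1 : (c.erase ⊤).card = c.card - 1 := Finset.card_erase_of_mem htopc
      have h2 : c₂.card = (c.erase ⊤).card - 1 := Finset.card_erase_of_mem
        (Finset.mem_erase.mpr ⟨qQ_ne_top, hq⟩)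
      have h3 : 0 < c.card := Finset.card_pos.mpr ⟨⊤, htopc⟩
      have h4 : 0 < (c.erase ⊤).card := Finset.card_pos.mpr
        ⟨qQ α n, Finset.mem_erase.mpr ⟨qQ_ne_top, hq⟩⟩
      omega
    -- `insert t₀ d` is a maximal chain of α
    have hchain : IsChain (· ≤ ·) ((insert t₀ d : Finset α) : Set α) := by
      rw [Finset.coe_insert]
      exact hd.insert (fun b _ _ => Or.inr (htop b))
    have hcardtd := hg (insert t₀ d) (Set.subset_univ _) hchain ?maximal
    case maximal =>
      intro u _ hu hsubu
      set w := insert ⊤ (insert (qQ α n) ((u.erase t₀).image (eQ α n))) with hwdef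
      have hwchain : IsChain (· ≤ ·) ((w : Finset (QQ α n)) : Set (QQ α n)) := by
        rw [hwdef, Finset.coe_insert, Finset.coe_insert]
        refine IsChain.insert (IsChain.insert ?_ ?_) (fun b _ _ => Or.inr le_top)
        · rw [Finset.coe_image]
          exact (hu.mono (by exact_mod_cast Finset.erase_subset _ _)).image_of_map_rel _ _ _
            (fun _ _ hh => (eQ α n).monotone hh)
        · intro b hb _
          rw [Finset.coe_image, Set.mem_image] at hb
          obtain ⟨a, ha, rfl⟩ := hb
          exact Or.inr ((eQ_le_qQ_iff' hn htop hg).mpr (Finset.mem_erase.mp ha).1)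
      have hcw : c ⊆ w := by
        intro x hx
        rcases QQ_cases x with rfl | rfl | ⟨a, rfl⟩
        · exact Finset.mem_insert_self _ _
        · exact Finset.mem_insert_of_mem (Finset.mem_insert_self _ _)
        · have hane : eQ α n a ≠ (⊤ : QQ α n) := eQ_ne_top
          have haq : eQ α n a ≠ qQ α n := eQ_ne_qQ
          have hac₂ : eQ α n a ∈ c₂ := Finset.mem_erase.mpr
            ⟨haq, Finset.mem_erase.mpr ⟨hane, hx⟩⟩
          have had : a ∈ d := (hmem a).mpr hac₂
          have hau : a ∈ u := hsubu (Finset.mem_insert_of_mem had)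
          have hat : a ≠ t₀ := fun hh => ht₀d (hh ▸ had)
          exact Finset.mem_insert_of_mem (Finset.mem_insert_of_mem
            (Finset.mem_image_of_mem _ (Finset.mem_erase.mpr ⟨hat, hau⟩)))
      have hcweq : c = w := hmax' w hwchain hcw
      have hwcard : w.card = (u.erase t₀).card + 2 := by
        rw [hwdef]
        rw [Finset.card_insert_of_notMem, Finset.card_insert_of_notMem,
          Finset.card_image_of_injective _ (eQ α n).injective]
        · intro hh
          rw [Finset.mem_image] at hh
          obtain ⟨a, -, ha⟩ := hh
          exact eQ_ne_qQ ha
        · intro hh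
          rcases Finset.mem_insert.mp hh with hh | hh
          · exact qQ_ne_top hh.symm
          · rw [Finset.mem_image] at hh
            obtain ⟨a, -, ha⟩ := hh
            exact eQ_ne_top ha
      have ht₀u : t₀ ∈ u := hsubu (Finset.mem_insert_self _ _)
      have hucard : (u.erase t₀).card = u.card - 1 := Finset.card_erase_of_mem ht₀u
      have hdu : insert t₀ d ⊆ u := hsubu
      have hult : u.card ≤ (insert t₀ d).card := by
        have h5 : (insert t₀ d).card = d.card + 1 := Finset.card_insert_of_notMem ht₀d
        have h6 : 0 < u.card := Finset.card_pos.mpr ⟨t₀, ht₀u⟩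
        have h7 : c.card = w.card := by rw [hcweq]
        omega
      exact Finset.eq_of_subset_of_card_le hdu hult
    rw [Finset.card_insert_of_notMem ht₀d] at hcardtd
    omega
  · -- case q ∉ c
    set c₂ := c.erase ⊤ with hc₂def
    have hsub : (c₂ : Set (QQ α n)) ⊆ Set.range (eQ α n) := by
      intro x hx
      have hx' := Finset.mem_coe.mp hx
      rcases QQ_cases x with rfl | rfl | ⟨a, rfl⟩
      · exact absurd (Finset.mem_erase.mp hx').1 (fun hh => hh rfl)
      · exact absurd ((Finset.erase_subset _ _) hx') hq
      · exact ⟨a, rfl⟩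
    obtain ⟨d, hd, hmem, hcard⟩ := chain_preimage (eQ α n) c₂
      (hc.mono (by exact_mod_cast Finset.erase_subset _ _)) hsub
    have hcardd := hg d (Set.subset_univ _) hd ?dmax
    case dmax =>
      intro u _ hu hdu
      set w := insert ⊤ (u.image (eQ α n)) with hwdef
      have hwchain : IsChain (· ≤ ·) ((w : Finset (QQ α n)) : Set (QQ α n)) := by
        rw [hwdef, Finset.coe_insert]
        refine IsChain.insert ?_ (fun b _ _ => Or.inr le_top)
        rw [Finset.coe_image]
        exact hu.image_of_map_rel _ _ _ (fun _ _ hh => (eQ α n).monotone hh)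
      have hcw : c ⊆ w := by
        intro x hx
        rcases QQ_cases x with rfl | rfl | ⟨a, rfl⟩
        · exact Finset.mem_insert_self _ _
        · exact absurd hx hq
        · have had : a ∈ d := (hmem a).mpr (Finset.mem_erase.mpr ⟨eQ_ne_top, hx⟩)
          exact Finset.mem_insert_of_mem (Finset.mem_image_of_mem _ (hdu had))
      have hcweq : c = w := hmax' w hwchain hcw
      have hwcard : w.card = u.card + 1 := by
        rw [hwdef, Finset.card_insert_of_notMem, Finset.card_image_of_injective _
          (eQ α n).injective]
        intro hh
        rw [Finset.mem_image] at hh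
        obtain ⟨a, -, ha⟩ := hh
        exact eQ_ne_top ha
      have hccard : c.card = c₂.card + 1 := by
        have hA : c₂.card = c.card - 1 := Finset.card_erase_of_mem htopc
        have hB : 0 < c.card := Finset.card_pos.mpr ⟨⊤, htopc⟩
        omega
      have hult : u.card ≤ d.card := by
        have h7 : c.card = w.card := by rw [hcweq]
        omega
      exact Finset.eq_of_subset_of_card_le hdu hult
    have hccard : c.card = c₂.card + 1 := by
      have h1 : c₂.card = c.card - 1 := Finset.card_erase_of_mem htopc
      have h3 : 0 < c.card := Finset.card_pos.mpr ⟨⊤, htopc⟩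
      omega
    omega

end QMain

section QBal
variable [PartialOrder α] [OrderBot α] [Finite α] {n : ℕ} {t₀ : α}

instance : Finite (QQ α n) := by
  have := Fintype.ofFinite (Semisusp α (boundary α n))
  exact inferInstanceAs (Finite (Option (Semisusp α (boundary α n))))

omit [OrderBot α] [Finite α] in
lemma count_sep_image {β : Type} [PartialOrder β] {f : α → β}
    (hinj : Function.Injective f) (hrho : ∀ x, rho (f x) = rho x) (X : Set α)
    (p : ℕ → Prop) :
    {y ∈ f '' X | p (rho y)}.ncard = {x ∈ X | p (rho x)}.ncard := by
  have hs : {y ∈ f '' X | p (rho y)} = f '' {x ∈ X | p (rho x)} := by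
    ext y
    constructor
    · rintro ⟨⟨x, hx, rfl⟩, hp⟩
      exact ⟨x, ⟨hx, (hrho x) ▸ hp⟩, rfl⟩
    · rintro ⟨x, ⟨hx, hp⟩, rfl⟩
      exact ⟨⟨x, hx, rfl⟩, (hrho x).symm ▸ hp⟩
  rw [hs, Set.ncard_image_of_injective _ hinj]

omit [PartialOrder α] [OrderBot α] [Finite α] in
lemma balanced_pair {β : Type} [PartialOrder β] {u v : β} (huv : u ≠ v)
    (hIcc : Set.Icc u v = {u, v}) (hr : rho v = rho u + 1) :
    {y ∈ Set.Icc u v | Even (rho y)}.ncard = {y ∈ Set.Icc u v | Odd (rho y)}.ncard := by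
  rw [hIcc]
  rcases Nat.even_or_odd (rho u) with hp | hp
  · have h1 : {y ∈ ({u, v} : Set β) | Even (rho y)} = {u} := by
      ext y
      simp only [Set.mem_insert_iff, Set.mem_singleton_iff, Set.mem_setOf_eq]
      constructor
      · rintro ⟨rfl | rfl, hy⟩
        · rfl
        · rw [hr, Nat.even_iff] at hy
          rw [Nat.even_iff] at hp
          omega
      · rintro rfl
        exact ⟨Or.inl rfl, hp⟩
    have h2 : {y ∈ ({u, v} : Set β) | Odd (rho y)} = {v} := by
      ext y
      simp only [Set.mem_insert_iff, Set.mem_singleton_iff, Set.mem_setOf_eq]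
      constructor
      · rintro ⟨rfl | rfl, hy⟩
        · rw [Nat.odd_iff] at hy
          rw [Nat.even_iff] at hp
          omega
        · rfl
      · rintro rfl
        refine ⟨Or.inr rfl, ?_⟩
        rw [Nat.odd_iff, hr, Nat.even_iff] at *
        omega
    rw [h1, h2, Set.ncard_singleton, Set.ncard_singleton]
  · have h1 : {y ∈ ({u, v} : Set β) | Even (rho y)} = {v} := by
      ext y
      simp only [Set.mem_insert_iff, Set.mem_singleton_iff, Set.mem_setOf_eq]
      constructor
      · rintro ⟨rfl | rfl, hy⟩
        · rw [Nat.even_iff] at hy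
          rw [Nat.odd_iff] at hp
          omega
        · rfl
      · rintro rfl
        refine ⟨Or.inr rfl, ?_⟩
        rw [Nat.even_iff, hr]
        rw [Nat.odd_iff] at hp
        omega
    have h2 : {y ∈ ({u, v} : Set β) | Odd (rho y)} = {u} := by
      ext y
      simp only [Set.mem_insert_iff, Set.mem_singleton_iff, Set.mem_setOf_eq]
      constructor
      · rintro ⟨rfl | rfl, hy⟩
        · rfl
        · rw [Nat.odd_iff, hr] at hy
          rw [Nat.odd_iff] at hp
          omega
      · rintro rfl
        exact ⟨Or.inl rfl, hp⟩
    rw [h1, h2, Set.ncard_singleton, Set.ncard_singleton]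

lemma Icc_eQ_eQ {a b : α} :
    Set.Icc (eQ α n a) (eQ α n b) = eQ α n '' Set.Icc a b := by
  ext y
  constructor
  · rintro ⟨h1, h2⟩
    rcases QQ_cases y with rfl | rfl | ⟨x, rfl⟩
    · exact absurd (top_le_iff.mp h2) eQ_ne_top
    · exact absurd h2 not_qQ_le_eQ
    · exact ⟨x, ⟨eQ_le_eQ.mp h1, eQ_le_eQ.mp h2⟩, rfl⟩
  · rintro ⟨x, ⟨hx1, hx2⟩, rfl⟩
    exact ⟨eQ_le_eQ.mpr hx1, eQ_le_eQ.mpr hx2⟩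

lemma Icc_eQ_qQ (hn : 0 < n) (htop : ∀ z, z ≤ t₀) (hg : IsGradedOfRank α n)
    {a : α} (ha : a ≠ t₀) :
    Set.Icc (eQ α n a) (qQ α n) =
      (fun x => if x = t₀ then qQ α n else eQ α n x) '' Set.Icc a t₀ := by
  ext y
  constructor
  · rintro ⟨h1, h2⟩
    rcases QQ_cases y with rfl | rfl | ⟨x, rfl⟩
    · exact absurd h2 not_top_le_qQ
    · exact ⟨t₀, ⟨htop a, le_rfl⟩, by simp⟩
    · have hx : x ≠ t₀ := (eQ_le_qQ_iff' hn htop hg).mp h2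
      exact ⟨x, ⟨eQ_le_eQ.mp h1, htop x⟩, by simp [hx]⟩
  · rintro ⟨x, ⟨hx1, _⟩, rfl⟩
    by_cases hx : x = t₀
    · subst hx
      simp only [if_pos rfl]
      exact ⟨(eQ_le_qQ_iff' hn htop hg).mpr ha, le_rfl⟩
    · simp only [if_neg hx]
      exact ⟨eQ_le_eQ.mpr hx1, (eQ_le_qQ_iff' hn htop hg).mpr hx⟩

lemma Icc_eQ_top (hn : 0 < n) (htop : ∀ z, z ≤ t₀) (hg : IsGradedOfRank α n)
    {a : α} (ha : a ≠ t₀) :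
    Set.Icc (eQ α n a) (⊤ : QQ α n) =
      insert ⊤ (insert (qQ α n) (eQ α n '' Set.Icc a t₀)) := by
  ext y
  constructor
  · rintro ⟨h1, -⟩
    rcases QQ_cases y with rfl | rfl | ⟨x, rfl⟩
    · exact Set.mem_insert _ _
    · exact Set.mem_insert_of_mem _ (Set.mem_insert _ _)
    · exact Set.mem_insert_of_mem _ (Set.mem_insert_of_mem _
        ⟨x, ⟨eQ_le_eQ.mp h1, htop x⟩, rfl⟩)
  · rintro (rfl | rfl | ⟨x, ⟨hx1, -⟩, rfl⟩)
    · exact ⟨le_top, le_rfl⟩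
    · exact ⟨(eQ_le_qQ_iff' hn htop hg).mpr ha, le_top⟩
    · exact ⟨eQ_le_eQ.mpr hx1, le_top⟩

lemma Icc_eQt0_top (hn : 0 < n) (htop : ∀ z, z ≤ t₀) (hg : IsGradedOfRank α n) :
    Set.Icc (eQ α n t₀) (⊤ : QQ α n) = {eQ α n t₀, ⊤} := by
  ext y
  constructor
  · rintro ⟨h1, -⟩
    rcases QQ_cases y with rfl | rfl | ⟨x, rfl⟩
    · exact Or.inr rfl
    · exact absurd ((eQ_le_qQ_iff' hn htop hg).mp h1) (fun hh => hh rfl)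
    · have : t₀ ≤ x := eQ_le_eQ.mp h1
      exact Or.inl (by rw [le_antisymm (htop x) this])
  · rintro (rfl | rfl)
    · exact ⟨le_rfl, le_top⟩
    · exact ⟨le_top, le_rfl⟩

lemma Icc_qQ_top : Set.Icc (qQ α n) (⊤ : QQ α n) = {qQ α n, ⊤} := by
  ext y
  constructor
  · rintro ⟨h1, -⟩
    rcases QQ_cases y with rfl | rfl | ⟨x, rfl⟩
    · exact Or.inr rfl
    · exact Or.inl rfl
    · exact absurd h1 not_qQ_le_eQ
  · rintro (rfl | rfl)
    · exact ⟨le_rfl, le_top⟩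
    · exact ⟨le_top, le_rfl⟩

lemma balancedQ (hn : 0 < n) (htop : ∀ z, z ≤ t₀) (hg : IsGradedOfRank α n)
    (hbal : BalancedIntervalsIn (Set.univ : Set α)) :
    BalancedIntervalsIn (Set.univ : Set (QQ α n)) := by
  intro s _ t _ hst
  rcases QQ_cases s with rfl | rfl | ⟨a, rfl⟩
  · exact absurd hst not_top_lt
  · -- s = q ; then t = ⊤
    rcases QQ_cases t with rfl | rfl | ⟨b, rfl⟩
    · exact balanced_pair qQ_ne_top Icc_qQ_top
        (by rw [rho_qQ hn htop hg, rho_topQ hn htop hg])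
    · exact absurd hst (lt_irrefl _)
    · exact absurd hst.le not_qQ_le_eQ
  · rcases QQ_cases t with rfl | rfl | ⟨b, rfl⟩
    · -- t = ⊤
      by_cases ha : a = t₀
      · subst ha
        refine balanced_pair eQ_ne_top (Icc_eQt0_top hn htop hg) ?_
        rw [rho_eQ, rho_top htop hg, rho_topQ hn htop hg]
      · rw [Icc_eQ_top hn htop hg ha]
        have hfin : ∀ X : Set (QQ α n), X.Finite := fun X => Set.toFinite X
        have hqE : ∀ p : ℕ → Prop, qQ α n ∉ {y ∈ eQ α n '' Set.Icc a t₀ | p (rho y)} := by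
          rintro p ⟨⟨x, -, hx⟩, -⟩
          exact eQ_ne_qQ hx
        have htE : ∀ p : ℕ → Prop,
            (⊤ : QQ α n) ∉ insert (qQ α n) {y ∈ eQ α n '' Set.Icc a t₀ | p (rho y)} := by
          rintro p (hh | ⟨⟨x, -, hx⟩, -⟩)
          · exact qQ_ne_top hh.symm
          · exact eQ_ne_top hx
        have hcnt : ∀ p : ℕ → Prop,
            {y ∈ eQ α n '' Set.Icc a t₀ | p (rho y)}.ncard
              = {x ∈ Set.Icc a t₀ | p (rho x)}.ncard :=
          fun p => count_sep_image (eQ α n).injective (fun _ => rho_eQ) _ p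
        have hlt : a < t₀ := lt_of_le_of_ne (htop a) ha
        have hbase := hbal a trivial t₀ trivial hlt
        rcases Nat.even_or_odd n with hp | hp
        · have h1 : {y ∈ insert ⊤ (insert (qQ α n) (eQ α n '' Set.Icc a t₀)) |
              Even (rho y)} = insert (qQ α n) {y ∈ eQ α n '' Set.Icc a t₀ | Even (rho y)} := by
            ext y
            simp only [Set.mem_insert_iff, Set.mem_setOf_eq]
            constructor
            · rintro ⟨rfl | rfl | hy, hp'⟩
              · rw [rho_topQ hn htop hg, Nat.even_iff] at hp'
                rw [Nat.even_iff] at hp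
                omega
              · exact Or.inl rfl
              · exact Or.inr ⟨hy, hp'⟩
            · rintro (rfl | ⟨hy, hp'⟩)
              · exact ⟨Or.inr (Or.inl rfl), by rw [rho_qQ hn htop hg]; exact hp⟩
              · exact ⟨Or.inr (Or.inr hy), hp'⟩
          have h2 : {y ∈ insert ⊤ (insert (qQ α n) (eQ α n '' Set.Icc a t₀)) |
              Odd (rho y)} = insert ⊤ {y ∈ eQ α n '' Set.Icc a t₀ | Odd (rho y)} := by
            ext y
            simp only [Set.mem_insert_iff, Set.mem_setOf_eq]
            constructor
            · rintro ⟨rfl | rfl | hy, hp'⟩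
              · exact Or.inl rfl
              · rw [rho_qQ hn htop hg, Nat.odd_iff] at hp'
                rw [Nat.even_iff] at hp
                omega
              · exact Or.inr ⟨hy, hp'⟩
            · rintro (rfl | ⟨hy, hp'⟩)
              · refine ⟨Or.inl rfl, ?_⟩
                rw [rho_topQ hn htop hg, Nat.odd_iff]
                rw [Nat.even_iff] at hp
                omega
              · exact ⟨Or.inr (Or.inr hy), hp'⟩
          rw [h1, h2, Set.ncard_insert_of_notMem (hqE _) (hfin _), hcnt, hbase, ← hcnt]
          have h3 : (⊤ : QQ α n) ∉ {y ∈ eQ α n '' Set.Icc a t₀ | Odd (rho y)} := by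
            rintro ⟨⟨x, -, hx⟩, -⟩
            exact eQ_ne_top hx
          rw [Set.ncard_insert_of_notMem h3 (hfin _)]
        · have h1 : {y ∈ insert ⊤ (insert (qQ α n) (eQ α n '' Set.Icc a t₀)) |
              Even (rho y)} = insert ⊤ {y ∈ eQ α n '' Set.Icc a t₀ | Even (rho y)} := by
            ext y
            simp only [Set.mem_insert_iff, Set.mem_setOf_eq]
            constructor
            · rintro ⟨rfl | rfl | hy, hp'⟩
              · exact Or.inl rfl
              · rw [rho_qQ hn htop hg, Nat.even_iff] at hp'
                rw [Nat.odd_iff] at hp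
                omega
              · exact Or.inr ⟨hy, hp'⟩
            · rintro (rfl | ⟨hy, hp'⟩)
              · refine ⟨Or.inl rfl, ?_⟩
                rw [rho_topQ hn htop hg, Nat.even_iff]
                rw [Nat.odd_iff] at hp
                omega
              · exact ⟨Or.inr (Or.inr hy), hp'⟩
          have h2 : {y ∈ insert ⊤ (insert (qQ α n) (eQ α n '' Set.Icc a t₀)) |
              Odd (rho y)} = insert (qQ α n) {y ∈ eQ α n '' Set.Icc a t₀ | Odd (rho y)} := by
            ext y
            simp only [Set.mem_insert_iff, Set.mem_setOf_eq]
            constructor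
            · rintro ⟨rfl | rfl | hy, hp'⟩
              · rw [rho_topQ hn htop hg, Nat.odd_iff] at hp'
                rw [Nat.odd_iff] at hp
                omega
              · exact Or.inl rfl
              · exact Or.inr ⟨hy, hp'⟩
            · rintro (rfl | ⟨hy, hp'⟩)
              · exact ⟨Or.inr (Or.inl rfl), by rw [rho_qQ hn htop hg]; exact hp⟩
              · exact ⟨Or.inr (Or.inr hy), hp'⟩
          have h3 : (⊤ : QQ α n) ∉ {y ∈ eQ α n '' Set.Icc a t₀ | Even (rho y)} := by
            rintro ⟨⟨x, -, hx⟩, -⟩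
            exact eQ_ne_top hx
          rw [h1, h2, Set.ncard_insert_of_notMem h3 (hfin _), hcnt, hbase, ← hcnt,
            Set.ncard_insert_of_notMem (hqE _) (hfin _)]
    · -- t = q
      have ha : a ≠ t₀ := by
        intro hh
        exact ((eQ_le_qQ_iff' hn htop hg).mp hst.le) hh
      have hfinj : Function.Injective (fun x => if x = t₀ then qQ α n else eQ α n x) := by
        intro x y hxy
        dsimp only at hxy
        split_ifs at hxy with h1 h2 h3
        · rw [h1, h2]
        · exact absurd hxy.symm eQ_ne_qQ
        · exact absurd hxy eQ_ne_qQ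
        · exact (eQ α n).injective hxy
      have hfrho : ∀ x, rho ((fun x => if x = t₀ then qQ α n else eQ α n x) x) = rho x := by
        intro x
        dsimp only
        split_ifs with hx
        · rw [hx, rho_qQ hn htop hg, rho_top htop hg]
        · rw [rho_eQ]
      rw [Icc_eQ_qQ hn htop hg ha]
      rw [count_sep_image hfinj hfrho, count_sep_image hfinj hfrho]
      exact hbal a trivial t₀ trivial (lt_of_le_of_ne (htop a) ha)
    · -- t = eQ b
      have hab : a < b := by
        rcases lt_iff_le_and_ne.mp hst with ⟨h1, h2⟩
        exact lt_iff_le_and_ne.mpr ⟨eQ_le_eQ.mp h1, fun hh => h2 (by rw [hh])⟩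
      rw [Icc_eQ_eQ]
      rw [count_sep_image (eQ α n).injective (fun _ => rho_eQ),
        count_sep_image (eQ α n).injective (fun _ => rho_eQ)]
      exact hbal a trivial b trivial hab

end QBal

section Final
variable [PartialOrder α] [OrderBot α] [Finite α]

/-- The order isomorphism between `α` and `Q ∖ {q, 1̂}`. -/
def isoSub (α : Type) [PartialOrder α] [OrderBot α] (n : ℕ) :
    α ≃o {x : QQ α n // x ≠ qQ α n ∧ x ≠ ⊤} where
  toEquiv := Equiv.ofBijective (fun a => ⟨eQ α n a, eQ_ne_qQ, eQ_ne_top⟩)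
    ⟨fun a b hab => (eQ α n).injective (congrArg Subtype.val hab),
     fun x => by
       obtain ⟨x, hxq, hxt⟩ := x
       rcases QQ_cases x with rfl | rfl | ⟨a, rfl⟩
       · exact absurd rfl hxt
       · exact absurd rfl hxq
       · exact ⟨a, rfl⟩⟩
  map_rel_iff' := by
    intro a b
    exact eQ_le_eQ

end Final
/-- Every Eulerian poset of positive rank is near-Eulerian: if `P` is
Eulerian of rank `n > 0` then `Q := Σ̃P ∪ {1̂}` (the semisuspension, with a new maximal
element adjoined) is Eulerian of rank `n + 1`, the semisuspension vertex `q` has rank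
`n`, `P = Q ∖ {q, 1̂}`, and hence `P` is near-Eulerian. -/
theorem eulerian_isNearEulerian
    (α : Type) [PartialOrder α] [Finite α] [OrderBot α] (n : ℕ) (hn : 0 < n)
    (h : IsEulerianOfRank α n) :
    IsEulerianOfRank (WithTop (Semisusp α (boundary α n))) (n + 1) ∧
    rho ((Semisusp.q : Semisusp α (boundary α n)) : WithTop (Semisusp α (boundary α n))) = n ∧
    Nonempty (α ≃o {x : WithTop (Semisusp α (boundary α n)) //
      x ≠ ((Semisusp.q : Semisusp α (boundary α n)) : WithTop (Semisusp α (boundary α n))) ∧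
      x ≠ ⊤}) ∧
    IsNearEulerianOfRank α n := by
  obtain ⟨hbot, ⟨t₀, htop⟩, hg, hbal⟩ := h
  have hQE : IsEulerianOfRank (QQ α n) (n + 1) :=
    ⟨⟨⊥, fun z => bot_le⟩, ⟨⊤, fun z => le_top⟩, gradedQ hn htop hg,
      balancedQ hn htop hg hbal⟩
  exact ⟨hQE, rho_qQ hn htop hg, ⟨isoSub α n⟩,
    ⟨QQ α n, inferInstance, inferInstance, qQ α n, ⊤, hQE, fun z => le_top,
      rho_qQ hn htop hg, qQ_ne_top, ⟨isoSub α n⟩⟩⟩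

end CDIndex
end
end

section
/- Let P be a near-Eulerian poset. Then the ab-index of P decomposes as Ψ_P = ℓ^Ψ_P + Ψ_{∂P}·a, where ℓ^Ψ_P := Ψ_{Σ̃P} − Ψ_{∂P}·(a+b). Moreover ℓ^Ψ_P lies in the subalgebra K⟨c,d⟩ of K⟨a,b⟩ generated by c = a+b and d = ab+ba, and as an element of K⟨c,d⟩ it equals Φ_{Σ̃P} − Φ_{∂P}·c. -/
open scoped Classical

noncomputable section

namespace CDIndex

variable {α β : Type}

/-! ### The flag enumerator, the `ab`-index and the `cd`-index -/

variable (K : Type) [Field K] [CharZero K]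

/-- The free noncommutative algebra `K⟨a, b⟩`. -/
abbrev FA := FreeAlgebra K (Fin 2)

/-- The letter `a`. -/
def la : FA K := FreeAlgebra.ι K 0

/-- The letter `b`. -/
def lb : FA K := FreeAlgebra.ι K 1

/-- `c = a + b`. -/
def lc : FA K := la K + lb K

/-- `d = ab + ba`. -/
def ld : FA K := la K * lb K + lb K * la K

/-- The characteristic monomial `u_S = u_1 ⋯ u_n` of a set `S` of ranks, where
`u_i = b` if `i ∈ S` and `u_i = a` otherwise. -/
def uWord (n : ℕ) (S : Set ℕ) : FA K :=
  (List.ofFn fun i : Fin n => if (i : ℕ) + 1 ∈ S then lb K else la K).prod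

/-- Chains of the subposet `S` which contain the element `b0` (intended: the minimal
element of `S`). -/
def chainsIn [PartialOrder α] (S : Set α) (b0 : α) : Set (Finset α) :=
  {C | (C : Set α) ⊆ S ∧ IsChain (· ≤ ·) (C : Set α) ∧ b0 ∈ C}

/-- The flag enumerator `Υ` of the subposet `S` with minimal element `b0`, of rank `n`;
ranks are computed relative to `b0`. -/
def upsSet [PartialOrder α] (S : Set α) (b0 : α) (n : ℕ) : FA K :=
  ∑ᶠ C ∈ chainsIn S b0, uWord K n ((fun y => rho y - rho b0) '' (C : Set α))

/-- The substitution `a ↦ a - b`, `b ↦ b` turning the flag enumerator into the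
`ab`-index. -/
def toAB : FA K →ₐ[K] FA K :=
  FreeAlgebra.lift K (fun i : Fin 2 => if i = 0 then la K - lb K else lb K)

/-- The `ab`-index `Ψ` of the subposet `S` with minimal element `b0`, of rank `n`:
`Ψ(a,b) = Υ(a-b, b)`. -/
def psiS [PartialOrder α] (S : Set α) (b0 : α) (n : ℕ) : FA K :=
  toAB K (upsSet K S b0 n)

/-- The subalgebra `K⟨c, d⟩ ⊆ K⟨a, b⟩` generated by `c = a + b` and `d = ab + ba`. -/
def cdSub : Subalgebra K (FA K) := Algebra.adjoin K {lc K, ld K}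

set_option linter.unusedSectionVars false
/-! ### Basic lemmas about `rho` -/

section RhoBasic

variable [PartialOrder α] [Finite α]

lemma rho_set_bddAbove (x : α) : BddAbove {k : ℕ | ∃ s : Finset α,
    IsChain (· ≤ ·) (s : Set α) ∧ (s : Set α) ⊆ Set.Iic x ∧ s.card = k + 1} := by
  haveI := Fintype.ofFinite α
  refine ⟨Fintype.card α, fun k hk => ?_⟩
  obtain ⟨s, -, -, hcard⟩ := hk
  have := Finset.card_le_univ s
  omega

lemma rho_set_nonempty (x : α) : (0 : ℕ) ∈ {k : ℕ | ∃ s : Finset α,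
    IsChain (· ≤ ·) (s : Set α) ∧ (s : Set α) ⊆ Set.Iic x ∧ s.card = k + 1} := by
  refine ⟨{x}, ?_, by simp, by simp⟩
  simp [IsChain, Set.Pairwise]

lemma chain_card_le_rho {x : α} {s : Finset α} (hc : IsChain (· ≤ ·) (s : Set α))
    (hs : (s : Set α) ⊆ Set.Iic x) : s.card ≤ rho x + 1 := by
  rcases Nat.eq_zero_or_pos s.card with h | h
  · omega
  · have hk : s.card - 1 ∈ {k : ℕ | ∃ s : Finset α,
        IsChain (· ≤ ·) (s : Set α) ∧ (s : Set α) ⊆ Set.Iic x ∧ s.card = k + 1} :=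
      ⟨s, hc, hs, by omega⟩
    have := le_csSup (rho_set_bddAbove x) hk
    have : s.card - 1 ≤ rho x := this
    omega

lemma exists_rho_chain (x : α) : ∃ s : Finset α, IsChain (· ≤ ·) (s : Set α) ∧
    (s : Set α) ⊆ Set.Iic x ∧ s.card = rho x + 1 ∧ x ∈ s := by
  have hmem : rho x ∈ {k : ℕ | ∃ s : Finset α,
      IsChain (· ≤ ·) (s : Set α) ∧ (s : Set α) ⊆ Set.Iic x ∧ s.card = k + 1} :=
    Nat.sSup_mem ⟨0, rho_set_nonempty x⟩ (rho_set_bddAbove x)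
  obtain ⟨s, hc, hs, hcard⟩ := hmem
  by_cases hx : x ∈ s
  · exact ⟨s, hc, hs, hcard, hx⟩
  · have hc' : IsChain (· ≤ ·) ((insert x s : Finset α) : Set α) := by
      rw [Finset.coe_insert]
      exact hc.insert (fun y hy _ => Or.inr (hs hy))
    have hs' : ((insert x s : Finset α) : Set α) ⊆ Set.Iic x := by
      rw [Finset.coe_insert]
      exact Set.insert_subset (le_refl x) hs
    have := chain_card_le_rho hc' hs'
    rw [Finset.card_insert_of_notMem hx] at this
    omega

lemma rho_mono {x y : α} (hxy : x ≤ y) : rho x ≤ rho y := by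
  obtain ⟨s, hc, hs, hcard, -⟩ := exists_rho_chain x
  have := chain_card_le_rho hc (hs.trans (Set.Iic_subset_Iic.mpr hxy))
  omega

lemma rho_strict_mono {x y : α} (hxy : x < y) : rho x < rho y := by
  obtain ⟨s, hc, hs, hcard, -⟩ := exists_rho_chain x
  have hy : y ∉ s := by
    intro hy
    have : y ≤ x := hs hy
    exact absurd hxy (not_lt_of_ge this)
  have hc' : IsChain (· ≤ ·) ((insert y s : Finset α) : Set α) := by
    rw [Finset.coe_insert]
    exact hc.insert (fun z hz _ => Or.inr ((hs hz).trans hxy.le))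
  have hs' : ((insert y s : Finset α) : Set α) ⊆ Set.Iic y := by
    rw [Finset.coe_insert]
    exact Set.insert_subset (le_refl y) fun z hz => (hs hz).trans hxy.le
  have := chain_card_le_rho hc' hs'
  rw [Finset.card_insert_of_notMem hy] at this
  omega

lemma rho_bot_eq_zero (b : α) (hb : ∀ z, b ≤ z) : rho b = 0 := by
  obtain ⟨s, hc, hs, hcard, hbs⟩ := exists_rho_chain b
  have : s = {b} := by
    apply Finset.eq_singleton_iff_unique_mem.mpr
    exact ⟨hbs, fun y hy => le_antisymm (hs hy) (hb y)⟩
  rw [this] at hcard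
  simp at hcard
  omega

lemma rho_eq_zero_iff (b : α) (hb : ∀ z, b ≤ z) (x : α) : rho x = 0 ↔ x = b := by
  constructor
  · intro hx
    by_contra hne
    have : b < x := lt_of_le_of_ne (hb x) (Ne.symm hne)
    have := rho_strict_mono this
    rw [rho_bot_eq_zero b hb] at this
    omega
  · intro hxb
    rw [hxb]
    exact rho_bot_eq_zero b hb

end RhoBasic

/-! ### Greatest elements of finite chains -/

section ChainTop

variable [PartialOrder α]

lemma chain_exists_greatest {C : Finset α} (hc : IsChain (· ≤ ·) (C : Set α))
    (hne : C.Nonempty) : ∃ z ∈ C, ∀ y ∈ C, y ≤ z := by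
  obtain ⟨m, hm, hmax⟩ : ∃ m ∈ C, ∀ x ∈ C, ¬ m < x := by
    obtain ⟨m, hm⟩ := Finset.exists_maximal hne
    exact ⟨m, hm.1, fun x hx h => lt_irrefl _ (lt_of_lt_of_le h (hm.2 hx h.le))⟩
  refine ⟨m, hm, fun y hy => ?_⟩
  rcases eq_or_ne y m with rfl | hne'
  · exact le_refl y
  · rcases hc hy hm hne' with h | h
    · exact h
    · rcases lt_or_eq_of_le h with h' | h'
      · exact absurd h' (hmax y hy)
      · exact h'.ge

/-- The greatest element of a (nonempty) finite chain. -/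
noncomputable def ctop (C : Finset α) (dflt : α) : α :=
  if h : ∃ z ∈ C, ∀ y ∈ C, y ≤ z then h.choose else dflt

lemma ctop_spec {C : Finset α} (d : α) (hc : IsChain (· ≤ ·) (C : Set α))
    (hne : C.Nonempty) : ctop C d ∈ C ∧ ∀ y ∈ C, y ≤ ctop C d := by
  have h : ∃ z ∈ C, ∀ y ∈ C, y ≤ z := chain_exists_greatest hc hne
  rw [ctop, dif_pos h]
  exact h.choose_spec

lemma ctop_eq_of_greatest {C : Finset α} (d : α) (hc : IsChain (· ≤ ·) (C : Set α))
    {z : α} (hz : z ∈ C) (hg : ∀ y ∈ C, y ≤ z) : ctop C d = z := by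
  obtain ⟨hm, hgr⟩ := ctop_spec d hc ⟨z, hz⟩
  exact le_antisymm (hg _ hm) (hgr _ hz)

end ChainTop

/-! ### Finiteness of the set of chains -/

section ChainsFin

variable [PartialOrder α] [Finite α]

/-- The chains of `S` through `b0`, collected into a `Finset`. -/
noncomputable def chF (S : Set α) (b0 : α) : Finset (Finset α) := by
  haveI := Fintype.ofFinite α
  exact (chainsIn S b0).toFinite.toFinset

lemma mem_chF {S : Set α} {b0 : α} {C : Finset α} :
    C ∈ chF S b0 ↔ (C : Set α) ⊆ S ∧ IsChain (· ≤ ·) (C : Set α) ∧ b0 ∈ C := by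
  simp [chF, Set.Finite.mem_toFinset, chainsIn]

lemma upsSet_eq_sum (S : Set α) (b0 : α) (n : ℕ) :
    upsSet K S b0 n =
      ∑ C ∈ chF S b0, uWord K n ((fun y => rho y - rho b0) '' (C : Set α)) := by
  rw [upsSet, ← finsum_mem_coe_finset]
  congr 1
  simp [chF]

end ChainsFin

/-! ### Lemmas about `uWord`, `toAB` and `cdSub` -/

section Words

lemma uWord_congr (n : ℕ) {S S' : Set ℕ}
    (h : ∀ i, 1 ≤ i → i ≤ n → (i ∈ S ↔ i ∈ S')) : uWord K n S = uWord K n S' := by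
  unfold uWord
  have heq : (fun i : Fin n => if (i : ℕ) + 1 ∈ S then lb K else la K) =
      (fun i : Fin n => if (i : ℕ) + 1 ∈ S' then lb K else la K) := by
    funext i
    have := h ((i : ℕ) + 1) (by omega) (by omega)
    by_cases hi : (i : ℕ) + 1 ∈ S
    · rw [if_pos hi, if_pos (this.mp hi)]
    · rw [if_neg hi, if_neg (fun hh => hi (this.mpr hh))]
  rw [heq]

lemma uWord_zero (S : Set ℕ) : uWord K 0 S = 1 := by
  simp [uWord]

lemma uWord_add_a (k r : ℕ) (S : Set ℕ) (h : ∀ j, k < j → j ≤ k + r → j ∉ S) :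
    uWord K (k + r) S = uWord K k S * (la K) ^ r := by
  unfold uWord
  rw [List.ofFn_add, List.prod_append]
  congr 1
  have : (List.ofFn fun i : Fin r =>
      if ((Fin.natAdd k i : Fin (k + r)) : ℕ) + 1 ∈ S then lb K else la K) =
      List.replicate r (la K) := by
    rw [List.eq_replicate_iff]
    refine ⟨by simp, fun x hx => ?_⟩
    rw [List.mem_ofFn] at hx
    obtain ⟨i, rfl⟩ := hx
    have : ((Fin.natAdd k i : Fin (k + r)) : ℕ) + 1 ∉ S := by
      apply h
      · simp
      · simp
    simp only [if_neg this]
  rw [this, List.prod_replicate]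

lemma uWord_all_a (n : ℕ) (S : Set ℕ) (h : ∀ j, 1 ≤ j → j ≤ n → j ∉ S) :
    uWord K n S = (la K) ^ n := by
  have := uWord_add_a K 0 n S (by intro j h1 h2; exact h j (by omega) (by omega))
  simpa [uWord_zero] using this

lemma uWord_succ_b (k : ℕ) (S : Set ℕ) (h : k + 1 ∈ S) :
    uWord K (k + 1) S = uWord K k S * lb K := by
  unfold uWord
  rw [List.ofFn_succ', List.prod_concat]
  congr 1 <;> simp [Fin.val_last, h]

lemma toAB_la : toAB K (la K) = la K - lb K := by
  simp [toAB, la, FreeAlgebra.lift_ι_apply]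

lemma toAB_lb : toAB K (lb K) = lb K := by
  simp [toAB, lb, FreeAlgebra.lift_ι_apply]

lemma lc_mem_cdSub : lc K ∈ cdSub K := Algebra.subset_adjoin (by simp)

lemma ld_mem_cdSub : ld K ∈ cdSub K := Algebra.subset_adjoin (by simp)

/-- The letter `e = a - b`. -/
def lab : FA K := la K - lb K

lemma lab_sq : lab K * lab K = lc K * lc K - ld K - ld K := by
  unfold lab lc ld
  noncomm_ring

lemma lab_sq_mem_cdSub : lab K * lab K ∈ cdSub K := by
  rw [lab_sq]
  exact sub_mem (sub_mem (mul_mem (lc_mem_cdSub K) (lc_mem_cdSub K)) (ld_mem_cdSub K))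
    (ld_mem_cdSub K)

lemma lab_pow_even_mem_cdSub {r : ℕ} (hr : Even r) : (lab K) ^ r ∈ cdSub K := by
  obtain ⟨j, rfl⟩ := hr
  have : j + j = 2 * j := by omega
  rw [this, pow_mul]
  apply pow_mem
  rw [sq]
  exact lab_sq_mem_cdSub K

end Words

/-! ### Transfer along embeddings with lower-set image -/

section Transfer

variable {γ δ : Type} [PartialOrder γ] [PartialOrder δ] [Finite γ] [Finite δ]

/-- An order-reflecting embedding whose image is a lower set. -/
def IsLowerEmb (j : γ → δ) : Prop :=
  (∀ a b, j a ≤ j b ↔ a ≤ b) ∧ (∀ z x, z ≤ j x → ∃ a, j a = z)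

namespace IsLowerEmb

variable {j : γ → δ}

lemma inj (hj : IsLowerEmb j) : Function.Injective j := fun a b hab =>
  le_antisymm ((hj.1 a b).mp hab.le) ((hj.1 b a).mp hab.ge)

lemma chain_image (hj : IsLowerEmb j) {C : Finset γ} (hc : IsChain (· ≤ ·) (C : Set γ)) :
    IsChain (· ≤ ·) ((C.image j : Finset δ) : Set δ) := by
  rw [Finset.coe_image]
  intro x hx y hy hxy
  obtain ⟨a, ha, rfl⟩ := hx
  obtain ⟨b, hb, rfl⟩ := hy
  have hab : a ≠ b := fun hab => hxy (by rw [hab])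
  rcases hc ha hb hab with h | h
  · exact Or.inl ((hj.1 a b).mpr h)
  · exact Or.inr ((hj.1 b a).mpr h)

lemma rho_eq (hj : IsLowerEmb j) (x : γ) : rho (j x) = rho x := by
  apply le_antisymm
  · obtain ⟨E, hEc, hEs, hEcard, -⟩ := exists_rho_chain (j x)
    set g : δ → γ := fun z => if h : ∃ a, j a = z then h.choose else x with hg
    have hgj : ∀ z ∈ E, j (g z) = z := by
      intro z hz
      have hzx : z ≤ j x := hEs hz
      obtain ⟨a, ha⟩ := hj.2 z x hzx
      have hex : ∃ a, j a = z := ⟨a, ha⟩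
      rw [hg]
      simp only [dif_pos hex]
      exact hex.choose_spec
    have hinj : Set.InjOn g (E : Set δ) := by
      intro z hz w hw hzw
      rw [← hgj z hz, ← hgj w hw, hzw]
    have hc' : IsChain (· ≤ ·) ((E.image g : Finset γ) : Set γ) := by
      rw [Finset.coe_image]
      intro u hu v hv huv
      obtain ⟨z, hz, rfl⟩ := hu
      obtain ⟨w, hw, rfl⟩ := hv
      have hzw : z ≠ w := fun h => huv (by rw [h])
      rcases hEc hz hw hzw with h | h
      · exact Or.inl ((hj.1 _ _).mp (by rw [hgj z hz, hgj w hw]; exact h))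
      · exact Or.inr ((hj.1 _ _).mp (by rw [hgj z hz, hgj w hw]; exact h))
    have hs' : ((E.image g : Finset γ) : Set γ) ⊆ Set.Iic x := by
      rw [Finset.coe_image]
      rintro u ⟨z, hz, rfl⟩
      have : j (g z) ≤ j x := by rw [hgj z hz]; exact hEs hz
      exact (hj.1 _ _).mp this
    have hcard : (E.image g).card = E.card := Finset.card_image_of_injOn (by
      intro z hz w hw
      exact hinj (by simpa using hz) (by simpa using hw))
    have := chain_card_le_rho hc' hs'
    omega
  · obtain ⟨D, hDc, hDs, hDcard, -⟩ := exists_rho_chain x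
    have hc' := hj.chain_image hDc
    have hs' : ((D.image j : Finset δ) : Set δ) ⊆ Set.Iic (j x) := by
      rw [Finset.coe_image]
      rintro u ⟨z, hz, rfl⟩
      exact (hj.1 _ _).mpr (hDs hz)
    have hcard : (D.image j).card = D.card := Finset.card_image_of_injective _ hj.inj
    have := chain_card_le_rho hc' hs'
    omega

lemma psiS_eq (hj : IsLowerEmb j) (s : Set γ) (b0 : γ) (m : ℕ) :
    psiS K (j '' s) (j b0) m = psiS K s b0 m := by
  unfold psiS
  congr 1
  rw [upsSet_eq_sum, upsSet_eq_sum]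
  set g : δ → γ := fun z => if h : ∃ a, j a = z then h.choose else b0 with hg
  have hgj : ∀ z, (∃ a, j a = z) → j (g z) = z := by
    intro z hz
    rw [hg]
    simp only [dif_pos hz]
    exact hz.choose_spec
  have hgji : ∀ a : γ, g (j a) = a := by
    intro a
    exact hj.inj (hgj (j a) ⟨a, rfl⟩)
  refine (Finset.sum_bij (fun C _ => C.image j) ?_ ?_ ?_ ?_).symm
  · -- maps to
    intro C hC
    rw [mem_chF] at hC ⊢
    obtain ⟨hCs, hCc, hCb⟩ := hC
    refine ⟨?_, hj.chain_image hCc, Finset.mem_image_of_mem j hCb⟩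
    rw [Finset.coe_image]
    exact Set.image_mono hCs
  · -- injective
    intro C hC C' hC' h
    exact Finset.image_injective hj.inj h
  · -- surjective
    intro C' hC'
    rw [mem_chF] at hC'
    obtain ⟨hCs, hCc, hCb⟩ := hC'
    have hpre : ∀ z ∈ C', ∃ a, j a = z := by
      intro z hz
      obtain ⟨a, -, ha⟩ := hCs hz
      exact ⟨a, ha⟩
    refine ⟨C'.image g, ?_, ?_⟩
    · rw [mem_chF]
      refine ⟨?_, ?_, ?_⟩
      · rw [Finset.coe_image]
        rintro u ⟨z, hz, rfl⟩
        have hz' : z ∈ C' := by simpa using hz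
        obtain ⟨a, has, ha⟩ := hCs hz'
        have : j (g z) = z := hgj z ⟨a, ha⟩
        have : g z = a := hj.inj (by rw [this, ha])
        rw [this]; exact has
      · intro u hu v hv huv
        rw [Finset.coe_image] at hu hv
        obtain ⟨z, hz, rfl⟩ := hu
        obtain ⟨w, hw, rfl⟩ := hv
        have hz' : z ∈ C' := by simpa using hz
        have hw' : w ∈ C' := by simpa using hw
        have hzw : z ≠ w := by
          intro h; exact huv (by rw [h])
        rcases hCc hz' hw' hzw with h | h
        · refine Or.inl ((hj.1 _ _).mp ?_)
          rw [hgj z (hpre z hz'), hgj w (hpre w hw')]; exact h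
        · refine Or.inr ((hj.1 _ _).mp ?_)
          rw [hgj z (hpre z hz'), hgj w (hpre w hw')]; exact h
      · have : g (j b0) ∈ C'.image g := Finset.mem_image_of_mem g hCb
        rwa [hgji b0] at this
    · -- C'.image g |>.image j = C'
      apply Finset.ext
      intro z
      simp only [Finset.mem_image]
      constructor
      · rintro ⟨u, ⟨w, hw, rfl⟩, rfl⟩
        rw [hgj w (hpre w hw)]
        exact hw
      · intro hz
        exact ⟨g z, ⟨z, hz, rfl⟩, hgj z (hpre z hz)⟩
  · -- values agree
    intro C hC
    congr 1
    rw [Finset.coe_image, Set.image_image]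
    have : ∀ y : γ, rho (j y) - rho (j b0) = rho y - rho b0 := by
      intro y
      rw [hj.rho_eq, hj.rho_eq]
    simp only [this]

end IsLowerEmb

end Transfer

/-! ### Euler relations and chain fiber decompositions -/

section Fibers

variable {γ : Type} [PartialOrder γ] [Finite γ]

/-- A set collected into a `Finset`. -/
noncomputable def finOf (s : Set γ) : Finset γ := s.toFinite.toFinset

@[simp] lemma mem_finOf {s : Set γ} {x : γ} : x ∈ finOf s ↔ x ∈ s :=
  Set.Finite.mem_toFinset _

lemma euler_sum (HB : BalancedIntervalsIn (Set.univ : Set γ)) {s t : γ} (hst : s < t) :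
    ∑ z ∈ finOf (Set.Icc s t), ((-1 : K)) ^ (rho z) = 0 := by
  have hbal := HB s trivial t trivial hst
  have hE : {y ∈ Set.Icc s t | Even (rho y)} =
      ↑((finOf (Set.Icc s t)).filter (fun z => Even (rho z))) := by
    ext y; simp
  have hO : {y ∈ Set.Icc s t | Odd (rho y)} =
      ↑((finOf (Set.Icc s t)).filter (fun z => ¬ Even (rho z))) := by
    ext y; simp [Nat.not_even_iff_odd]
  rw [hE, hO, Set.ncard_coe_finset, Set.ncard_coe_finset] at hbal
  rw [← Finset.sum_filter_add_sum_filter_not _ (fun z => Even (rho z))]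
  have h1 : ∀ z ∈ (finOf (Set.Icc s t)).filter (fun z => Even (rho z)),
      ((-1 : K)) ^ (rho z) = 1 := by
    intro z hz
    exact Even.neg_one_pow (Finset.mem_filter.mp hz).2
  have h2 : ∀ z ∈ (finOf (Set.Icc s t)).filter (fun z => ¬ Even (rho z)),
      ((-1 : K)) ^ (rho z) = -1 := by
    intro z hz
    exact Odd.neg_one_pow (Nat.not_even_iff_odd.mp (Finset.mem_filter.mp hz).2)
  rw [Finset.sum_congr rfl h1, Finset.sum_congr rfl h2, Finset.sum_const,
    Finset.sum_const, hbal]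
  simp

lemma euler_ioo (HB : BalancedIntervalsIn (Set.univ : Set γ)) {s t : γ} (hst : s < t) :
    ∑ z ∈ finOf (Set.Ioo s t), ((-1 : K)) ^ (rho z)
      = -((-1 : K)) ^ (rho s) - ((-1 : K)) ^ (rho t) := by
  have h := euler_sum K HB hst
  have hdecomp : finOf (Set.Icc s t) = insert s (insert t (finOf (Set.Ioo s t))) := by
    apply Finset.ext
    intro z
    simp only [mem_finOf, Finset.mem_insert, Set.mem_Icc, Set.mem_Ioo]
    constructor
    · rintro ⟨h1, h2⟩
      rcases eq_or_lt_of_le h1 with h1' | h1'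
      · exact Or.inl h1'.symm
      · rcases eq_or_lt_of_le h2 with h2' | h2'
        · exact Or.inr (Or.inl h2')
        · exact Or.inr (Or.inr ⟨h1', h2'⟩)
    · rintro (rfl | rfl | ⟨h1, h2⟩)
      · exact ⟨le_refl _, hst.le⟩
      · exact ⟨hst.le, le_refl _⟩
      · exact ⟨h1.le, h2.le⟩
  have hs1 : s ∉ insert t (finOf (Set.Ioo s t)) := by
    intro hmem
    rcases Finset.mem_insert.mp hmem with h' | h'
    · exact hst.ne h'
    · rw [mem_finOf] at h'
      exact lt_irrefl s h'.1
  have ht1 : t ∉ finOf (Set.Ioo s t) := by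
    intro hmem
    rw [mem_finOf] at hmem
    exact lt_irrefl t hmem.2
  rw [hdecomp, Finset.sum_insert hs1, Finset.sum_insert ht1] at h
  linear_combination h

variable (b : γ)

lemma mem_chF_Ico {t : γ} {C : Finset γ} (hb : ∀ z, b ≤ z) :
    C ∈ chF (Set.Ico b t) b ↔
      IsChain (· ≤ ·) (C : Set γ) ∧ b ∈ C ∧ ∀ y ∈ C, y < t := by
  rw [mem_chF]
  constructor
  · rintro ⟨hs, hc, hbC⟩
    exact ⟨hc, hbC, fun y hy => (hs hy).2⟩
  · rintro ⟨hc, hbC, hlt⟩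
    exact ⟨fun y hy => ⟨hb y, hlt y hy⟩, hc, hbC⟩

lemma fiber_bot (hb : ∀ z, b ≤ z) {t : γ} (hbt : b < t) :
    (chF (Set.Ico b t) b).filter (fun C => ctop C b = b) = {{b}} := by
  apply Finset.ext
  intro C
  simp only [Finset.mem_filter, Finset.mem_singleton]
  constructor
  · rintro ⟨hC, htop⟩
    rw [mem_chF_Ico b hb] at hC
    obtain ⟨hc, hbC, -⟩ := hC
    obtain ⟨hmem, hgr⟩ := ctop_spec b hc ⟨b, hbC⟩
    apply Finset.eq_singleton_iff_unique_mem.mpr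
    refine ⟨hbC, fun y hy => ?_⟩
    have := hgr y hy
    rw [htop] at this
    exact le_antisymm this (hb y)
  · rintro rfl
    have hc : IsChain (· ≤ ·) (({b} : Finset γ) : Set γ) := by
      simp [IsChain, Set.Pairwise]
    refine ⟨?_, ?_⟩
    · rw [mem_chF_Ico b hb]
      exact ⟨hc, Finset.mem_singleton_self b, fun y hy => by
        rw [Finset.mem_singleton] at hy; rw [hy]; exact hbt⟩
    · exact ctop_eq_of_greatest b hc (Finset.mem_singleton_self b)
        (fun y hy => by rw [Finset.mem_singleton] at hy; rw [hy])

lemma fiber_filter_lt (hb : ∀ z, b ≤ z) {t z : γ} (hz : z ∈ Set.Ioo b t) :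
    (chF (Set.Ico b t) b).filter (fun C => ctop C b < z) = chF (Set.Ico b z) b := by
  apply Finset.ext
  intro C
  simp only [Finset.mem_filter]
  constructor
  · rintro ⟨hC, hlt⟩
    rw [mem_chF_Ico b hb] at hC ⊢
    obtain ⟨hc, hbC, hall⟩ := hC
    obtain ⟨hmem, hgr⟩ := ctop_spec b hc ⟨b, hbC⟩
    exact ⟨hc, hbC, fun y hy => lt_of_le_of_lt (hgr y hy) hlt⟩
  · intro hC
    rw [mem_chF_Ico b hb] at hC
    obtain ⟨hc, hbC, hall⟩ := hC
    obtain ⟨hmem, hgr⟩ := ctop_spec b hc ⟨b, hbC⟩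
    constructor
    · rw [mem_chF_Ico b hb]
      exact ⟨hc, hbC, fun y hy => lt_trans (hall y hy) hz.2⟩
    · exact hall _ hmem

lemma fiber_sum_eq (hb : ∀ z, b ≤ z) {t z : γ} (hz : z ∈ Set.Ioo b t)
    (f g : Finset γ → FA K)
    (hfg : ∀ C' ∈ chF (Set.Ico b z) b, g C' = f (insert z C')) :
    ∑ C ∈ (chF (Set.Ico b t) b).filter (fun C => ctop C b = z), f C
      = ∑ C' ∈ chF (Set.Ico b z) b, g C' := by
  refine Finset.sum_nbij' (i := fun C => C.erase z) (j := fun C' => insert z C')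
    ?_ ?_ ?_ ?_ ?_
  · -- maps into
    intro C hC
    rw [Finset.mem_filter, mem_chF_Ico b hb] at hC
    obtain ⟨⟨hc, hbC, hall⟩, htop⟩ := hC
    obtain ⟨hmem, hgr⟩ := ctop_spec b hc ⟨b, hbC⟩
    rw [htop] at hgr hmem
    rw [mem_chF_Ico b hb]
    refine ⟨hc.mono ?_, ?_, ?_⟩
    · rw [Finset.coe_erase]
      exact Set.diff_subset
    · rw [Finset.mem_erase]
      exact ⟨fun hbz => absurd hz.1 (by rw [← hbz]; exact lt_irrefl b), hbC⟩
    · intro y hy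
      rw [Finset.mem_erase] at hy
      exact lt_of_le_of_ne (hgr y hy.2) hy.1
  · -- reverse maps into
    intro C' hC'
    rw [mem_chF_Ico b hb] at hC'
    obtain ⟨hc, hbC, hall⟩ := hC'
    have hchain : IsChain (· ≤ ·) ((insert z C' : Finset γ) : Set γ) := by
      rw [Finset.coe_insert]
      exact hc.insert (fun y hy _ => Or.inr (hall y hy).le)
    rw [Finset.mem_filter, mem_chF_Ico b hb]
    refine ⟨⟨hchain, Finset.mem_insert_of_mem hbC, ?_⟩, ?_⟩
    · intro y hy
      rcases Finset.mem_insert.mp hy with rfl | hy'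
      · exact hz.2
      · exact lt_trans (hall y hy') hz.2
    · refine ctop_eq_of_greatest b hchain (Finset.mem_insert_self z C') ?_
      intro y hy
      rcases Finset.mem_insert.mp hy with rfl | hy'
      · exact le_refl y
      · exact (hall y hy').le
  · -- left inverse
    intro C hC
    rw [Finset.mem_filter, mem_chF_Ico b hb] at hC
    obtain ⟨⟨hc, hbC, hall⟩, htop⟩ := hC
    obtain ⟨hmem, -⟩ := ctop_spec b hc ⟨b, hbC⟩
    rw [htop] at hmem
    exact Finset.insert_erase hmem
  · -- right inverse
    intro C' hC'
    rw [mem_chF_Ico b hb] at hC'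
    obtain ⟨-, -, hall⟩ := hC'
    apply Finset.erase_insert
    intro hzC'
    exact absurd (hall z hzC') (lt_irrefl z)
  · -- values agree
    intro C hC
    have hC' := hC
    rw [Finset.mem_filter, mem_chF_Ico b hb] at hC
    obtain ⟨⟨hc, hbC, hall⟩, htop⟩ := hC
    obtain ⟨hmem, hgr⟩ := ctop_spec b hc ⟨b, hbC⟩
    rw [htop] at hgr hmem
    have herase : C.erase z ∈ chF (Set.Ico b z) b := by
      rw [mem_chF_Ico b hb]
      refine ⟨hc.mono ?_, ?_, ?_⟩
      · rw [Finset.coe_erase]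
        exact Set.diff_subset
      · rw [Finset.mem_erase]
        exact ⟨fun hbz => absurd hz.1 (by rw [← hbz]; exact lt_irrefl b), hbC⟩
      · intro y hy
        rw [Finset.mem_erase] at hy
        exact lt_of_le_of_ne (hgr y hy.2) hy.1
    rw [hfg _ herase, Finset.insert_erase hmem]

end Fibers

/-! ### More word helpers and the partition lemma -/

section BKPrep

lemma uWord_pad (k m : ℕ) (hkm : k ≤ m) (S : Set ℕ) (h : ∀ j ∈ S, j ≤ k) :
    uWord K m S = uWord K k S * (la K) ^ (m - k) := by
  obtain ⟨r, rfl⟩ : ∃ r, m = k + r := ⟨m - k, by omega⟩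
  rw [uWord_add_a K k r S (fun j h1 h2 hj => absurd (h j hj) (by omega)),
    Nat.add_sub_cancel_left]

lemma uWord_last_b (k : ℕ) (hk : 1 ≤ k) (S : Set ℕ) (h : k ∈ S) :
    uWord K k S = uWord K (k - 1) S * lb K := by
  obtain ⟨r, rfl⟩ : ∃ r, k = r + 1 := ⟨k - 1, by omega⟩
  rw [uWord_succ_b K r S h, Nat.add_sub_cancel]

variable {γ : Type} [PartialOrder γ] [Finite γ]

lemma psiS_eq_toAB_sum (b : γ) (hb : ∀ z, b ≤ z) (s : Set γ) (n : ℕ) :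
    psiS K s b n =
      toAB K (∑ C ∈ chF s b, uWord K n ((fun y => rho y) '' (C : Set γ))) := by
  unfold psiS
  rw [upsSet_eq_sum]
  congr 2
  funext C
  congr 1
  simp only [rho_bot_eq_zero b hb, Nat.sub_zero]

lemma psiS_empty (b0 : γ) (m : ℕ) : psiS K (∅ : Set γ) b0 m = 0 := by
  unfold psiS
  rw [upsSet_eq_sum]
  have : chF (∅ : Set γ) b0 = ∅ := by
    apply Finset.eq_empty_of_forall_notMem
    intro C hC
    rw [mem_chF] at hC
    exact absurd (hC.1 (Finset.mem_coe.mpr hC.2.2)) (Set.notMem_empty b0)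
  rw [this, Finset.sum_empty, map_zero]

lemma chain_partition (b : γ) (hb : ∀ z, b ≤ z) {t : γ} (hbt : b < t)
    (f : Finset γ → FA K) :
    ∑ C ∈ chF (Set.Ico b t) b, f C
      = f {b} + ∑ z ∈ finOf (Set.Ioo b t),
          ∑ C ∈ (chF (Set.Ico b t) b).filter (fun C => ctop C b = z), f C := by
  have hmaps : ∀ C ∈ chF (Set.Ico b t) b, ctop C b ∈ finOf (Set.Ico b t) := by
    intro C hC
    rw [mem_chF_Ico b hb] at hC
    obtain ⟨hc, hbC, hall⟩ := hC
    obtain ⟨hmem, -⟩ := ctop_spec b hc ⟨b, hbC⟩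
    rw [mem_finOf]
    exact ⟨hb _, hall _ hmem⟩
  rw [← Finset.sum_fiberwise_of_maps_to hmaps f]
  have hIco : finOf (Set.Ico b t) = insert b (finOf (Set.Ioo b t)) := by
    apply Finset.ext
    intro z
    simp only [mem_finOf, Finset.mem_insert, Set.mem_Ico, Set.mem_Ioo]
    constructor
    · rintro ⟨h1, h2⟩
      rcases eq_or_lt_of_le h1 with h' | h'
      · exact Or.inl h'.symm
      · exact Or.inr ⟨h', h2⟩
    · rintro (rfl | ⟨h1, h2⟩)
      · exact ⟨le_refl _, hbt⟩
      · exact ⟨h1.le, h2⟩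
  have hbnot : b ∉ finOf (Set.Ioo b t) := by
    intro hmem
    rw [mem_finOf] at hmem
    exact lt_irrefl b hmem.1
  rw [hIco, Finset.sum_insert hbnot, fiber_bot b hb hbt, Finset.sum_singleton]

end BKPrep

/-! ### The two recursions for the flag enumerator of a lower interval -/

section BKRec

variable {γ : Type} [PartialOrder γ] [Finite γ]

lemma word_insert_top (b : γ) (hb : ∀ z, b ≤ z) {t z : γ} (hz : z ∈ Set.Ioo b t)
    {m : ℕ} (hm : rho t = m + 1) {C' : Finset γ} (hC' : C' ∈ chF (Set.Ico b z) b) :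
    uWord K m ((fun y => rho y) '' ((insert z C' : Finset γ) : Set γ))
      = uWord K (rho z - 1) ((fun y => rho y) '' (C' : Set γ))
          * (lb K * (la K) ^ (m - rho z)) := by
  rw [mem_chF_Ico b hb] at hC'
  obtain ⟨hc, hbC, hall⟩ := hC'
  have hrb : rho b = 0 := rho_bot_eq_zero b hb
  have hk1 : 1 ≤ rho z := by
    have := rho_strict_mono hz.1
    omega
  have hkm : rho z ≤ m := by
    have := rho_strict_mono hz.2
    omega
  have hX : ∀ p ∈ (fun y => rho y) '' (C' : Set γ), p < rho z := by
    rintro p ⟨y, hy, rfl⟩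
    exact rho_strict_mono (hall y hy)
  rw [Finset.coe_insert, Set.image_insert_eq]
  rw [uWord_pad K (rho z) m hkm _ ?hbound]
  case hbound =>
    rintro j hj
    rcases Set.mem_insert_iff.mp hj with rfl | hj'
    · exact le_refl _
    · exact (hX j hj').le
  rw [uWord_last_b K (rho z) hk1 _ (Set.mem_insert _ _)]
  rw [uWord_congr K (rho z - 1)
    (S' := (fun y => rho y) '' (C' : Set γ)) ?hcongr, mul_assoc]
  case hcongr =>
    intro i h1 h2
    rw [Set.mem_insert_iff]
    constructor
    · rintro (rfl | hi)
      · omega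
      · exact hi
    · intro hi
      exact Or.inr hi

lemma word_pad_small (b : γ) (hb : ∀ z, b ≤ z) {t z : γ} (hz : z ∈ Set.Ioo b t)
    {m : ℕ} (hm : rho t = m + 1) {C' : Finset γ} (hC' : C' ∈ chF (Set.Ico b z) b) :
    uWord K m ((fun y => rho y) '' (C' : Set γ))
      = uWord K (rho z - 1) ((fun y => rho y) '' (C' : Set γ))
          * (la K) ^ (m - rho z + 1) := by
  rw [mem_chF_Ico b hb] at hC'
  obtain ⟨hc, hbC, hall⟩ := hC'
  have hk1 : 1 ≤ rho z := by
    have := rho_strict_mono hz.1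
    have := rho_bot_eq_zero b hb
    omega
  have hkm : rho z ≤ m := by
    have := rho_strict_mono hz.2
    omega
  have hX : ∀ p ∈ (fun y => rho y) '' (C' : Set γ), p < rho z := by
    rintro p ⟨y, hy, rfl⟩
    exact rho_strict_mono (hall y hy)
  have := uWord_pad K (rho z - 1) m (by omega)
    ((fun y => rho y) '' (C' : Set γ)) (fun j hj => by have := hX j hj; omega)
  rw [this]
  have hexp : m - (rho z - 1) = m - rho z + 1 := by omega
  rw [hexp]

lemma word_bot (b : γ) (hb : ∀ z, b ≤ z) (m : ℕ) :
    uWord K m ((fun y => rho y) '' (({b} : Finset γ) : Set γ)) = (la K) ^ m := by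
  rw [Finset.coe_singleton, Set.image_singleton]
  apply uWord_all_a
  intro j h1 h2 hj
  rw [Set.mem_singleton_iff] at hj
  rw [rho_bot_eq_zero b hb] at hj
  omega

end BKRec

/-! ### The two identities for the flag enumerator of `[b, t)` -/

section BKRec2

variable {γ : Type} [PartialOrder γ] [Finite γ]

lemma ups_rec (b : γ) (hb : ∀ z, b ≤ z) {t : γ} (hbt : b < t) {m : ℕ}
    (hm : rho t = m + 1) :
    ∑ C ∈ chF (Set.Ico b t) b, uWord K m ((fun y => rho y) '' (C : Set γ))
      = (la K) ^ m + ∑ z ∈ finOf (Set.Ioo b t),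
          (∑ C' ∈ chF (Set.Ico b z) b,
            uWord K (rho z - 1) ((fun y => rho y) '' (C' : Set γ)))
            * (lb K * (la K) ^ (m - rho z)) := by
  rw [chain_partition K b hb hbt, word_bot K b hb m]
  congr 1
  apply Finset.sum_congr rfl
  intro z hz
  rw [mem_finOf] at hz
  rw [fiber_sum_eq K b hb hz _
    (fun C' => uWord K (rho z - 1) ((fun y => rho y) '' (C' : Set γ))
      * (lb K * (la K) ^ (m - rho z)))
    (fun C' hC' => (word_insert_top K b hb hz hm hC').symm)]
  rw [Finset.sum_mul]

lemma ups_euler (b : γ) (hb : ∀ z, b ≤ z)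
    (HB : BalancedIntervalsIn (Set.univ : Set γ)) {t : γ} (hbt : b < t) {m : ℕ}
    (hm : rho t = m + 1) :
    (∑ z ∈ finOf (Set.Ioo b t), ((-1 : K)) ^ (rho z) •
        ((∑ C' ∈ chF (Set.Ico b z) b,
            uWord K (rho z - 1) ((fun y => rho y) '' (C' : Set γ)))
          * (la K) ^ (m - rho z + 1)))
      + (la K) ^ m
      + (∑ z ∈ finOf (Set.Ioo b t), ((-1 : K)) ^ (rho z) •
        ((∑ C' ∈ chF (Set.Ico b z) b,
            uWord K (rho z - 1) ((fun y => rho y) '' (C' : Set γ)))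
          * (lb K * (la K) ^ (m - rho z))))
      + ((-1 : K)) ^ (m + 1) •
          (∑ C ∈ chF (Set.Ico b t) b, uWord K m ((fun y => rho y) '' (C : Set γ)))
      = 0 := by
  set IooT := finOf (Set.Ioo b t) with hIooT
  set chT := chF (Set.Ico b t) b with hchT
  set u : Finset γ → FA K :=
    fun C => uWord K m ((fun y => rho y) '' (C : Set γ)) with hu
  set Ups : γ → FA K := fun z => ∑ C' ∈ chF (Set.Ico b z) b,
      uWord K (rho z - 1) ((fun y => rho y) '' (C' : Set γ)) with hUps
  set A : FA K := ∑ C ∈ chT,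
      (∑ z ∈ finOf (Set.Ioo (ctop C b) t), ((-1 : K)) ^ (rho z)) • u C with hA
  have hctop : ∀ C ∈ chT, ctop C b ∈ C ∧ (∀ y ∈ C, y ≤ ctop C b) ∧ ctop C b < t := by
    intro C hC
    rw [hchT, mem_chF_Ico b hb] at hC
    obtain ⟨hc, hbC, hall⟩ := hC
    obtain ⟨hmem, hgr⟩ := ctop_spec b hc ⟨b, hbC⟩
    exact ⟨hmem, hgr, hall _ hmem⟩
  -- Evaluation 2 of A : by double counting over the top two elements
  have hA2 : A = ∑ z ∈ IooT,
      ((-1 : K)) ^ (rho z) • (Ups z * (la K) ^ (m - rho z + 1)) := by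
    have hsplit : ∀ C ∈ chT, finOf (Set.Ioo (ctop C b) t)
        = IooT.filter (fun z => ctop C b < z) := by
      intro C hC
      apply Finset.ext
      intro z
      simp only [mem_finOf, Finset.mem_filter, Set.mem_Ioo, hIooT, mem_finOf]
      constructor
      · rintro ⟨h1, h2⟩
        exact ⟨⟨lt_of_le_of_lt (hb _) h1, h2⟩, h1⟩
      · rintro ⟨⟨h1, h2⟩, h3⟩
        exact ⟨h3, h2⟩
    calc A = ∑ C ∈ chT, ∑ z ∈ IooT.filter (fun z => ctop C b < z),
          ((-1 : K)) ^ (rho z) • u C := by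
            rw [hA]
            apply Finset.sum_congr rfl
            intro C hC
            rw [hsplit C hC, Finset.sum_smul]
      _ = ∑ C ∈ chT, ∑ z ∈ IooT,
            (if ctop C b < z then ((-1 : K)) ^ (rho z) • u C else 0) := by
            apply Finset.sum_congr rfl
            intro C hC
            rw [Finset.sum_filter]
      _ = ∑ z ∈ IooT, ∑ C ∈ chT,
            (if ctop C b < z then ((-1 : K)) ^ (rho z) • u C else 0) :=
            Finset.sum_comm
      _ = ∑ z ∈ IooT, ∑ C ∈ chT.filter (fun C => ctop C b < z),
            ((-1 : K)) ^ (rho z) • u C := by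
            apply Finset.sum_congr rfl
            intro z hz
            rw [← Finset.sum_filter]
      _ = ∑ z ∈ IooT, ((-1 : K)) ^ (rho z) • (Ups z * (la K) ^ (m - rho z + 1)) := by
            apply Finset.sum_congr rfl
            intro z hz
            rw [hIooT, mem_finOf] at hz
            rw [hchT, fiber_filter_lt b hb hz, ← Finset.smul_sum]
            congr 1
            rw [hUps, Finset.sum_mul]
            apply Finset.sum_congr rfl
            intro C' hC'
            exact word_pad_small K b hb hz hm hC'
  -- Evaluation 1 of A : via the Euler relation on upper intervals
  have hB : (∑ C ∈ chT, ((-1 : K)) ^ (rho (ctop C b)) • u C)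
      = (la K) ^ m + ∑ z ∈ IooT,
          ((-1 : K)) ^ (rho z) • (Ups z * (lb K * (la K) ^ (m - rho z))) := by
    rw [hchT, chain_partition K b hb hbt (fun C => ((-1 : K)) ^ (rho (ctop C b)) • u C)]
    have hsing : IsChain (· ≤ ·) (({b} : Finset γ) : Set γ) := by
      simp [IsChain, Set.Pairwise]
    have hctopb : ctop ({b} : Finset γ) b = b :=
      ctop_eq_of_greatest b hsing (Finset.mem_singleton_self b)
        (fun y hy => by rw [Finset.mem_singleton] at hy; rw [hy])
    congr 1
    · rw [hctopb, rho_bot_eq_zero b hb, pow_zero, one_smul, hu]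
      exact word_bot K b hb m
    · apply Finset.sum_congr rfl
      intro z hz
      rw [mem_finOf] at hz
      have hstep : ∀ C ∈ (chF (Set.Ico b t) b).filter (fun C => ctop C b = z),
          ((-1 : K)) ^ (rho (ctop C b)) • u C = ((-1 : K)) ^ (rho z) • u C := by
        intro C hC
        rw [(Finset.mem_filter.mp hC).2]
      rw [Finset.sum_congr rfl hstep]
      rw [fiber_sum_eq K b hb hz _
        (fun C' => ((-1 : K)) ^ (rho z) •
          (uWord K (rho z - 1) ((fun y => rho y) '' (C' : Set γ))
            * (lb K * (la K) ^ (m - rho z))))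
        (fun C' hC' => by
          simp only [hu]
          rw [word_insert_top K b hb hz hm hC'])]
      rw [← Finset.smul_sum]
      congr 1
      rw [hUps, Finset.sum_mul]
  have hA1 : A = -((la K) ^ m + ∑ z ∈ IooT,
        ((-1 : K)) ^ (rho z) • (Ups z * (lb K * (la K) ^ (m - rho z))))
      - ((-1 : K)) ^ (m + 1) • (∑ C ∈ chT, u C) := by
    have h1 : A = ∑ C ∈ chT,
        ((-((-1 : K)) ^ (rho (ctop C b))) - ((-1 : K)) ^ (m + 1)) • u C := by
      rw [hA]
      apply Finset.sum_congr rfl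
      intro C hC
      have hlt : ctop C b < t := (hctop C hC).2.2
      rw [euler_ioo K HB hlt, hm]
    rw [h1]
    have h2 : ∀ C ∈ chT,
        ((-((-1 : K)) ^ (rho (ctop C b))) - ((-1 : K)) ^ (m + 1)) • u C
          = -(((-1 : K)) ^ (rho (ctop C b)) • u C) - ((-1 : K)) ^ (m + 1) • u C := by
      intro C hC
      rw [sub_smul, neg_smul]
    rw [Finset.sum_congr rfl h2, Finset.sum_sub_distrib, Finset.sum_neg_distrib]
    rw [hB, Finset.smul_sum]
  -- combine
  rw [← hA2, hA1]
  abel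

end BKRec2

/-! ### The cd-index theorem for lower intervals of balanced posets -/

section BKMain

variable {γ : Type} [PartialOrder γ] [Finite γ]

lemma lab_def : lab K = la K - lb K := rfl

lemma alg_solve {M : Type} [AddCommGroup M] [Module K M] {ι : Type} (I : Finset ι)
    (Psi Xm : M) (Y Z : ι → M) (w : ι → K) (m : ℕ)
    (h1 : Psi = Xm + ∑ i ∈ I, Y i)
    (h2 : (∑ i ∈ I, w i • Z i) + Xm + (∑ i ∈ I, w i • Y i)
        + ((-1 : K)) ^ (m + 1) • Psi = 0) :
    (2 : K) • Psi = ((1 : K) + (-1 : K) ^ m) • Xm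
      + ∑ i ∈ I, (Y i + (((-1 : K)) ^ m * w i) • Z i + (((-1 : K)) ^ m * w i) • Y i) := by
  have hT : ((-1 : K)) ^ (m + 1) • Psi
      = -(((∑ i ∈ I, w i • Z i) + Xm) + ∑ i ∈ I, w i • Y i) :=
    eq_neg_of_add_eq_zero_right h2
  have hsq : ((-1 : K)) ^ (m + 1) * ((-1 : K)) ^ (m + 1) = 1 := by
    rw [← pow_add]
    exact Even.neg_one_pow ⟨m + 1, rfl⟩
  have hF3 : Psi = ((-1 : K)) ^ m •
      (((∑ i ∈ I, w i • Z i) + Xm) + ∑ i ∈ I, w i • Y i) := by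
    calc Psi = (((-1 : K)) ^ (m + 1) * ((-1 : K)) ^ (m + 1)) • Psi := by
          rw [hsq, one_smul]
      _ = ((-1 : K)) ^ (m + 1) • (((-1 : K)) ^ (m + 1) • Psi) := by rw [mul_smul]
      _ = ((-1 : K)) ^ (m + 1) •
          (-(((∑ i ∈ I, w i • Z i) + Xm) + ∑ i ∈ I, w i • Y i)) := by rw [hT]
      _ = (-((-1 : K)) ^ (m + 1)) •
          (((∑ i ∈ I, w i • Z i) + Xm) + ∑ i ∈ I, w i • Y i) := by
          rw [smul_neg, neg_smul]
      _ = ((-1 : K)) ^ m •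
          (((∑ i ∈ I, w i • Z i) + Xm) + ∑ i ∈ I, w i • Y i) := by
          congr 1
          rw [pow_succ]
          ring
  rw [two_smul]
  nth_rewrite 2 [hF3]
  nth_rewrite 1 [h1]
  rw [smul_add, smul_add, Finset.smul_sum, Finset.smul_sum]
  simp only [smul_smul]
  rw [add_smul, one_smul, Finset.sum_add_distrib, Finset.sum_add_distrib]
  abel

lemma bk_aux (b : γ) (hb : ∀ z, b ≤ z) (HB : BalancedIntervalsIn (Set.univ : Set γ)) :
    ∀ N, ∀ t : γ, rho t ≤ N → psiS K (Set.Ico b t) b (rho t - 1) ∈ cdSub K := by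
  intro N
  induction N with
  | zero =>
    intro t ht
    have : t = b := (rho_eq_zero_iff b hb t).mp (Nat.le_zero.mp ht)
    rw [this, Set.Ico_self, psiS_empty]
    exact zero_mem _
  | succ N ih =>
    intro t ht
    rcases eq_or_ne t b with rfl | htb
    · rw [Set.Ico_self, psiS_empty]
      exact zero_mem _
    have hbt : b < t := lt_of_le_of_ne (hb t) (Ne.symm htb)
    have hrb : rho b = 0 := rho_bot_eq_zero b hb
    have hrt1 : 1 ≤ rho t := by
      have h1 := rho_strict_mono hbt
      omega
    obtain ⟨m, hm⟩ : ∃ m, rho t = m + 1 := ⟨rho t - 1, by omega⟩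
    rw [psiS_eq_toAB_sum K b hb, hm, Nat.add_sub_cancel]
    -- membership of the subsidiary indices
    have hPmem : ∀ z ∈ finOf (Set.Ioo b t),
        (∑ C' ∈ chF (Set.Ico b z) b,
          toAB K (uWord K (rho z - 1) ((fun y => rho y) '' (C' : Set γ)))) ∈ cdSub K := by
      intro z hz
      rw [mem_finOf] at hz
      have hz' : rho z ≤ N := by
        have h1 := rho_strict_mono hz.2
        omega
      have hmem := ih z hz'
      rw [psiS_eq_toAB_sum K b hb, map_sum] at hmem
      exact hmem
    have hrz : ∀ z ∈ finOf (Set.Ioo b t), 1 ≤ rho z ∧ rho z ≤ m := by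
      intro z hz
      rw [mem_finOf] at hz
      have h1 := rho_strict_mono hz.1
      have h2 := rho_strict_mono hz.2
      omega
    -- the two identities, after applying `toAB`
    have e1 := congrArg (toAB K) (ups_rec K b hb hbt hm)
    have e2 := congrArg (toAB K) (ups_euler K b hb HB hbt hm)
    simp only [map_add, map_sum, map_mul, map_pow, map_smul, map_zero, toAB_la,
      toAB_lb, ← lab_def] at e1 e2
    -- solve the two identities
    rw [map_sum]
    set I := finOf (Set.Ioo b t) with hI
    set Psi := ∑ x ∈ chF (Set.Ico b t) b,
      toAB K (uWord K m ((fun y => rho y) '' (x : Set γ))) with hPsi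
    set G : γ → FA K := fun z => ∑ x ∈ chF (Set.Ico b z) b,
      toAB K (uWord K (rho z - 1) ((fun y => rho y) '' (x : Set γ))) with hG
    set e := lab K with he
    have key := alg_solve K I Psi (e ^ m)
      (fun z => G z * (lb K * e ^ (m - rho z)))
      (fun z => G z * e ^ (m - rho z + 1))
      (fun z => ((-1 : K)) ^ (rho z)) m e1 e2
    have hPsi2 : Psi = (2⁻¹ : K) • ((2 : K) • Psi) := by
      rw [smul_smul]
      norm_num
    rw [hPsi2, key]
    apply Subalgebra.smul_mem
    apply add_mem
    · rcases Nat.even_or_odd m with hev | hod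
      · rw [hev.neg_one_pow]
        exact Subalgebra.smul_mem _ (lab_pow_even_mem_cdSub K hev) _
      · rw [hod.neg_one_pow]
        have h0 : (1 : K) + -1 = 0 := by ring
        rw [h0, zero_smul]
        exact zero_mem _
    · apply sum_mem
      intro z hz
      have hGz : G z ∈ cdSub K := hPmem z hz
      obtain ⟨h1z, h2z⟩ := hrz z hz
      have hcoef : ((-1 : K)) ^ m * ((-1 : K)) ^ (rho z)
          = ((-1 : K)) ^ (m - rho z) := by
        rw [← pow_add, show m + rho z = (m - rho z) + 2 * rho z by omega, pow_add,
          pow_mul]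
        norm_num
      simp only [hcoef]
      have hp1 : e ^ (m - rho z + 1) = e * e ^ (m - rho z) := by
        rw [pow_succ']
      rcases Nat.even_or_odd (m - rho z) with hev | hod
      · rw [hev.neg_one_pow, one_smul, one_smul, hp1]
        have hcomb : G z * (lb K * e ^ (m - rho z)) + G z * (e * e ^ (m - rho z))
            + G z * (lb K * e ^ (m - rho z)) = G z * (lc K * e ^ (m - rho z)) := by
          rw [he, lab_def, lc]
          noncomm_ring
        rw [hcomb]
        exact mul_mem hGz (mul_mem (lc_mem_cdSub K) (lab_pow_even_mem_cdSub K hev))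
      · rw [hod.neg_one_pow, neg_one_smul, neg_one_smul, hp1]
        have hcomb : G z * (lb K * e ^ (m - rho z)) + -(G z * (e * e ^ (m - rho z)))
            + -(G z * (lb K * e ^ (m - rho z))) = -(G z * (e * e ^ (m - rho z))) := by
          abel
        rw [hcomb, ← pow_succ']
        exact neg_mem (mul_mem hGz (lab_pow_even_mem_cdSub K hod.add_one))

end BKMain

/-! ### Rank theory in graded posets -/

section Graded

variable {γ : Type} [PartialOrder γ] [Finite γ]

lemma exists_maximal_superchain {s : Finset γ} (hs : IsChain (· ≤ ·) (s : Set γ)) :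
    ∃ D : Finset γ, s ⊆ D ∧ IsChain (· ≤ ·) (D : Set γ) ∧
      (∀ r : Finset γ, IsChain (· ≤ ·) (r : Set γ) → D ⊆ r → D = r) := by
  haveI := Fintype.ofFinite γ
  set 𝒞 : Finset (Finset γ) :=
    Finset.univ.filter (fun r => IsChain (· ≤ ·) (r : Set γ) ∧ s ⊆ r) with h𝒞
  have hne : 𝒞.Nonempty := ⟨s, by simp [h𝒞, hs]⟩
  obtain ⟨D, hD, hmax⟩ : ∃ m ∈ 𝒞, ∀ x ∈ 𝒞, ¬ m < x := by
    obtain ⟨m, hm⟩ := Finset.exists_maximal hne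
    exact ⟨m, hm.1, fun x hx h => lt_irrefl _ (lt_of_lt_of_le h (hm.2 hx h.le))⟩
  rw [h𝒞, Finset.mem_filter] at hD
  refine ⟨D, hD.2.2, hD.2.1, fun r hr hDr => ?_⟩
  by_contra hne'
  have : D < r := lt_of_le_of_ne hDr hne'
  apply hmax r ?_ this
  rw [h𝒞, Finset.mem_filter]
  exact ⟨Finset.mem_univ r, hr, hD.2.2.trans hDr⟩

lemma card_filter_le_of_maximal {N : ℕ} (hgr : IsGradedOfRank γ N) {C : Finset γ}
    (hCc : IsChain (· ≤ ·) (C : Set γ))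
    (hCmax : ∀ r : Finset γ, IsChain (· ≤ ·) (r : Set γ) → C ⊆ r → C = r)
    {x : γ} (hx : x ∈ C) :
    (C.filter (fun y => y ≤ x)).card = rho x + 1 := by
  obtain ⟨D, hDc, hDs, hDcard, hDx⟩ := exists_rho_chain x
  set Cge := C.filter (fun y => x ≤ y) with hCge
  set Cle := C.filter (fun y => y ≤ x) with hCle
  -- E is a maximal chain
  set E := D ∪ Cge with hE
  have hEc : IsChain (· ≤ ·) (E : Set γ) := by
    intro u hu v hv huv
    rw [hE, Finset.coe_union, Set.mem_union] at hu hv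
    have hcase : ∀ w, w ∈ D ∨ w ∈ Cge → (w : γ) ≤ x ∨ x ≤ w := by
      rintro w (hw | hw)
      · exact Or.inl (hDs hw)
      · rw [hCge] at hw
        exact Or.inr (Finset.mem_filter.mp hw).2
    rcases hu with hu | hu
    · rcases hv with hv | hv
      · exact hDc hu hv huv
      · rw [hCge] at hv
        exact Or.inl ((hDs hu).trans (Finset.mem_filter.mp hv).2)
    · rcases hv with hv | hv
      · rw [hCge] at hu
        exact Or.inr ((hDs hv).trans (Finset.mem_filter.mp hu).2)
      · rw [hCge] at hu hv
        exact hCc (Finset.mem_coe.mpr (Finset.mem_filter.mp hu).1)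
          (Finset.mem_coe.mpr (Finset.mem_filter.mp hv).1) huv
  have hEmax : ∀ r : Finset γ, IsChain (· ≤ ·) (r : Set γ) → E ⊆ r → E = r := by
    intro r hr hEr
    by_contra hne'
    obtain ⟨w, hwr, hwE⟩ := Finset.exists_of_ssubset (lt_of_le_of_ne hEr hne')
    have hxE : x ∈ E := by
      rw [hE, Finset.mem_union]
      exact Or.inl hDx
    have hwx : w ≤ x ∨ x ≤ w := by
      rcases eq_or_ne w x with rfl | hwx'
      · exact Or.inl (le_refl w)
      · exact hr hwr (Finset.mem_coe.mpr (hEr hxE)) hwx'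
    rcases hwx with hwx | hwx
    · -- w ≤ x : contradicts maximality of the rho-chain D
      have hwD : w ∉ D := fun hwD =>
        hwE (by rw [hE, Finset.mem_union]; exact Or.inl hwD)
      have hc' : IsChain (· ≤ ·) ((insert w D : Finset γ) : Set γ) := by
        have hsub : ((insert w D : Finset γ) : Set γ) ⊆ (r : Set γ) := by
          rw [Finset.coe_insert]
          apply Set.insert_subset (Finset.mem_coe.mpr hwr)
          intro u hu
          exact Finset.mem_coe.mpr (hEr (by rw [hE, Finset.mem_union]; exact Or.inl hu))
        exact hr.mono hsub
      have hs' : ((insert w D : Finset γ) : Set γ) ⊆ Set.Iic x := by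
        rw [Finset.coe_insert]
        exact Set.insert_subset hwx hDs
      have := chain_card_le_rho hc' hs'
      rw [Finset.card_insert_of_notMem hwD] at this
      omega
    · -- x ≤ w : contradicts maximality of C
      have hwC : w ∉ C := by
        intro hwC
        apply hwE
        rw [hE, Finset.mem_union, hCge]
        exact Or.inr (Finset.mem_filter.mpr ⟨hwC, hwx⟩)
      have hc' : IsChain (· ≤ ·) ((insert w C : Finset γ) : Set γ) := by
        rw [Finset.coe_insert]
        apply hCc.insert
        intro y hy hne''
        have hyC : y ∈ C := Finset.mem_coe.mp hy
        rcases eq_or_ne y x with rfl | hyx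
        · exact Or.inr hwx
        · rcases hCc hy (Finset.mem_coe.mpr hx) hyx with h | h
          · exact Or.inr (h.trans hwx)
          · -- x ≤ y : both y and w in r, comparable
            have hyr : y ∈ r := hEr (by
              rw [hE, Finset.mem_union, hCge]
              exact Or.inr (Finset.mem_filter.mpr ⟨hyC, h⟩))
            rcases hr (Finset.mem_coe.mpr hyr) hwr (fun hyw => hne'' hyw.symm) with
              h' | h'
            · exact Or.inr h'
            · exact Or.inl h'
      have := hCmax (insert w C) hc' (Finset.subset_insert w C)
      exact hwC (by rw [this]; exact Finset.mem_insert_self w C)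
  have hEcard : E.card = N + 1 := hgr E (by simp) hEc (fun r _ hrc hEr => hEmax r hrc hEr)
  have hCcard : C.card = N + 1 := hgr C (by simp) hCc (fun r _ hrc hCr => hCmax r hrc hCr)
  -- intersections
  have hDCge : D ∩ Cge = {x} := by
    apply Finset.ext
    intro u
    rw [Finset.mem_inter, Finset.mem_singleton]
    constructor
    · rintro ⟨hu1, hu2⟩
      rw [hCge] at hu2
      exact le_antisymm (hDs (Finset.mem_coe.mpr hu1)) (Finset.mem_filter.mp hu2).2
    · rintro rfl
      rw [hCge]
      exact ⟨hDx, Finset.mem_filter.mpr ⟨hx, le_refl _⟩⟩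
  have hCsplit : Cle ∪ Cge = C := by
    apply Finset.ext
    intro u
    rw [Finset.mem_union, hCle, hCge, Finset.mem_filter, Finset.mem_filter]
    constructor
    · rintro (⟨h, -⟩ | ⟨h, -⟩) <;> exact h
    · intro hu
      rcases eq_or_ne u x with rfl | hux
      · exact Or.inl ⟨hu, le_refl u⟩
      · rcases hCc (Finset.mem_coe.mpr hu) (Finset.mem_coe.mpr hx) hux with h | h
        · exact Or.inl ⟨hu, h⟩
        · exact Or.inr ⟨hu, h⟩
  have hCinter : Cle ∩ Cge = {x} := by
    apply Finset.ext
    intro u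
    rw [Finset.mem_inter, Finset.mem_singleton, hCle, hCge, Finset.mem_filter,
      Finset.mem_filter]
    constructor
    · rintro ⟨⟨-, h1⟩, ⟨-, h2⟩⟩
      exact le_antisymm h1 h2
    · rintro rfl
      exact ⟨⟨hx, le_refl u⟩, ⟨hx, le_refl u⟩⟩
  have h1 := Finset.card_union_add_card_inter D Cge
  have h2 := Finset.card_union_add_card_inter Cle Cge
  rw [hDCge] at h1
  rw [hCinter, hCsplit] at h2
  rw [← hE] at h1
  simp only [Finset.card_singleton] at h1 h2
  omega

lemma rho_cover {N : ℕ} (hgr : IsGradedOfRank γ N) {x y : γ} (hxy : x ⋖ y) :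
    rho y = rho x + 1 := by
  have hchain : IsChain (· ≤ ·) (({x, y} : Finset γ) : Set γ) := by
    intro u hu v hv huv
    simp only [Finset.coe_insert, Finset.coe_singleton, Set.mem_insert_iff,
      Set.mem_singleton_iff] at hu hv
    rcases hu with rfl | rfl <;> rcases hv with rfl | rfl
    · exact absurd rfl huv
    · exact Or.inl hxy.le
    · exact Or.inr hxy.le
    · exact absurd rfl huv
  obtain ⟨C, hsC, hCc, hCmax⟩ := exists_maximal_superchain hchain
  have hxC : x ∈ C := hsC (by simp)
  have hyC : y ∈ C := hsC (by simp)
  have h1 := card_filter_le_of_maximal hgr hCc hCmax hxC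
  have h2 := card_filter_le_of_maximal hgr hCc hCmax hyC
  have hfil : C.filter (fun z => z ≤ y) = insert y (C.filter (fun z => z ≤ x)) := by
    apply Finset.ext
    intro z
    rw [Finset.mem_insert, Finset.mem_filter, Finset.mem_filter]
    constructor
    · rintro ⟨hzC, hzy⟩
      rcases eq_or_ne z y with rfl | hzy'
      · exact Or.inl rfl
      · refine Or.inr ⟨hzC, ?_⟩
        have hzy'' : z < y := lt_of_le_of_ne hzy hzy'
        rcases eq_or_ne z x with rfl | hzx
        · exact le_refl z
        · rcases hCc (Finset.mem_coe.mpr hzC) (Finset.mem_coe.mpr hxC) hzx with h | h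
          · exact h
          · exact absurd hzy'' (by simpa using hxy.2 (lt_of_le_of_ne h (Ne.symm hzx)))
    · rintro (rfl | ⟨hzC, hzx⟩)
      · exact ⟨hyC, le_refl z⟩
      · exact ⟨hzC, hzx.trans hxy.le⟩
  have hynot : y ∉ C.filter (fun z => z ≤ x) := by
    rw [Finset.mem_filter]
    rintro ⟨-, hyx⟩
    exact absurd (lt_of_le_of_lt hyx hxy.lt) (lt_irrefl y)
  rw [hfil, Finset.card_insert_of_notMem hynot] at h2
  omega

lemma rho_top_s5 {N : ℕ} (hgr : IsGradedOfRank γ N) (tp : γ) (htp : ∀ z, z ≤ tp) :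
    rho tp = N := by
  have hchain : IsChain (· ≤ ·) (({tp} : Finset γ) : Set γ) := by
    simp [IsChain, Set.Pairwise]
  obtain ⟨C, hsC, hCc, hCmax⟩ := exists_maximal_superchain hchain
  have htpC : tp ∈ C := hsC (by simp)
  have h1 := card_filter_le_of_maximal hgr hCc hCmax htpC
  have hfil : C.filter (fun z => z ≤ tp) = C := by
    apply Finset.filter_true_of_mem
    intro z hz
    exact htp z
  have hCcard : C.card = N + 1 := hgr C (by simp) hCc (fun r _ hrc hCr => hCmax r hrc hCr)
  rw [hfil, hCcard] at h1
  omega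

lemma rho_eq_N_iff {N : ℕ} (hgr : IsGradedOfRank γ N) (tp : γ) (htp : ∀ z, z ≤ tp)
    (x : γ) : rho x = N ↔ x = tp := by
  constructor
  · intro hx
    by_contra hne
    have : x < tp := lt_of_le_of_ne (htp x) hne
    have := rho_strict_mono this
    rw [rho_top_s5 hgr tp htp] at this
    omega
  · intro h
    rw [h]
    exact rho_top_s5 hgr tp htp

end Graded

/-! ### Splitting off the chains through `q`, and the diamond property -/

section QLemmas

variable {γ : Type} [PartialOrder γ] [Finite γ]

lemma psiS_split (b q tp : γ) (hb : ∀ z, b ≤ z) (htp : ∀ z, z ≤ tp)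
    (hIoi : ∀ z, q < z → z = tp) {n : ℕ} (hrq : rho q = n) (hn : 1 ≤ n)
    (hqtp : q < tp) (hrtp : rho tp = n + 1) :
    psiS K (Set.Ico b tp) b n
      = psiS K (Set.Ico b tp \ {q}) b n
        + psiS K (Set.Ico b q) b (n - 1) * lb K := by
  have hbq : b < q := by
    rcases eq_or_ne b q with rfl | hne
    · exfalso
      have := rho_bot_eq_zero b hb
      omega
    · exact lt_of_le_of_ne (hb q) hne
  have hqIoo : q ∈ Set.Ioo b tp := ⟨hbq, hqtp⟩
  rw [psiS_eq_toAB_sum K b hb, psiS_eq_toAB_sum K b hb, psiS_eq_toAB_sum K b hb]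
  have hU : (∑ C ∈ chF (Set.Ico b tp) b, uWord K n ((fun y => rho y) '' (C : Set γ)))
      = (∑ C ∈ chF (Set.Ico b tp \ {q}) b, uWord K n ((fun y => rho y) '' (C : Set γ)))
        + (∑ C' ∈ chF (Set.Ico b q) b,
            uWord K (n - 1) ((fun y => rho y) '' (C' : Set γ))) * lb K := by
    rw [← Finset.sum_filter_add_sum_filter_not (chF (Set.Ico b tp) b)
      (fun C => q ∉ C)]
    congr 1
    · -- chains avoiding q
      apply Finset.sum_congr ?_ (fun _ _ => rfl)
      apply Finset.ext
      intro C
      rw [Finset.mem_filter, mem_chF_Ico b hb, mem_chF]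
      constructor
      · rintro ⟨⟨hc, hbC, hall⟩, hq⟩
        refine ⟨?_, hc, hbC⟩
        intro y hy
        have hyC : y ∈ C := Finset.mem_coe.mp hy
        refine ⟨⟨hb y, hall y hyC⟩, ?_⟩
        rw [Set.mem_singleton_iff]
        rintro rfl
        exact hq hyC
      · rintro ⟨hsub, hc, hbC⟩
        refine ⟨⟨hc, hbC, fun y hy => (hsub (Finset.mem_coe.mpr hy)).1.2⟩, ?_⟩
        intro hqC
        exact (hsub (Finset.mem_coe.mpr hqC)).2 rfl
    · -- chains through q
      have hfeq : (chF (Set.Ico b tp) b).filter (fun C => ¬ q ∉ C)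
          = (chF (Set.Ico b tp) b).filter (fun C => ctop C b = q) := by
        apply Finset.ext
        intro C
        rw [Finset.mem_filter, Finset.mem_filter]
        constructor
        · rintro ⟨hC, hqC⟩
          rw [not_not] at hqC
          refine ⟨hC, ?_⟩
          rw [mem_chF_Ico b hb] at hC
          obtain ⟨hc, hbC, hall⟩ := hC
          apply ctop_eq_of_greatest b hc hqC
          intro y hy
          rcases eq_or_ne y q with rfl | hyq
          · exact le_refl y
          · rcases hc (Finset.mem_coe.mpr hy) (Finset.mem_coe.mpr hqC) hyq with h | h
            · exact h
            · exfalso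
              have : y = tp := hIoi y (lt_of_le_of_ne h (Ne.symm hyq))
              rw [this] at hy
              exact absurd (hall tp hy) (lt_irrefl tp)
        · rintro ⟨hC, htop⟩
          refine ⟨hC, ?_⟩
          rw [not_not, ← htop]
          rw [mem_chF_Ico b hb] at hC
          obtain ⟨hc, hbC, -⟩ := hC
          exact (ctop_spec b hc ⟨b, hbC⟩).1
      rw [hfeq, fiber_sum_eq K b hb hqIoo _
        (fun C' => uWord K (n - 1) ((fun y => rho y) '' (C' : Set γ)) * lb K) ?_,
        Finset.sum_mul]
      intro C' hC'
      have := word_insert_top K b hb hqIoo hrtp hC'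
      rw [hrq] at this
      rw [this]
      have hz : n - n = 0 := by omega
      rw [hz, pow_zero, mul_one]
  rw [hU, map_add, map_mul, toAB_lb]

lemma cover_char {N n : ℕ} (hgr : IsGradedOfRank γ N) (hN : N = n + 1)
    {x : γ} (hx : rho x = n - 1) (hn : 1 ≤ n) :
    {z : γ | x ⋖ z} = {z : γ | x < z ∧ rho z = n} := by
  ext z
  simp only [Set.mem_setOf_eq]
  constructor
  · intro hcov
    have := rho_cover hgr hcov
    exact ⟨hcov.lt, by omega⟩
  · rintro ⟨hlt, hrz⟩
    refine ⟨hlt, ?_⟩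
    intro c hc1 hc2
    have h1 := rho_strict_mono hc1
    have h2 := rho_strict_mono hc2
    omega

lemma middles_ncard (HB : BalancedIntervalsIn (Set.univ : Set γ))
    {N n : ℕ} (hgr : IsGradedOfRank γ N) (hN : N = n + 1) (tp : γ)
    (htp : ∀ z, z ≤ tp) {x : γ} (hx : rho x = n - 1) (hn : 1 ≤ n) :
    {z : γ | x < z ∧ rho z = n}.ncard = 2 := by
  have hrtp : rho tp = n + 1 := by rw [rho_top_s5 hgr tp htp, hN]
  have hxtp : x < tp := by
    apply lt_of_le_of_ne (htp x)
    intro h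
    rw [h, hrtp] at hx
    omega
  have hbal := HB x trivial tp trivial hxtp
  have hchar : ∀ y, y ∈ Set.Icc x tp → y = x ∨ y = tp ∨ (x < y ∧ rho y = n) := by
    rintro y ⟨h1, h2⟩
    rcases eq_or_ne y x with rfl | hyx
    · exact Or.inl rfl
    rcases eq_or_ne y tp with rfl | hytp
    · exact Or.inr (Or.inl rfl)
    have hxy : x < y := lt_of_le_of_ne h1 (Ne.symm hyx)
    have h3 := rho_strict_mono hxy
    have h4 := rho_strict_mono (lt_of_le_of_ne h2 hytp)
    refine Or.inr (Or.inr ⟨hxy, by omega⟩)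
  have hxne : x ≠ tp := fun h => by rw [h, hrtp] at hx; omega
  have hMIcc : {z : γ | x < z ∧ rho z = n} ⊆ Set.Icc x tp :=
    fun z hz => ⟨hz.1.le, htp z⟩
  have hMx : x ∉ {z : γ | x < z ∧ rho z = n} := fun h => absurd h.1 (lt_irrefl x)
  have hMtp : tp ∉ {z : γ | x < z ∧ rho z = n} := fun h => by
    have := h.2
    omega
  rcases Nat.even_or_odd n with hev | hod
  ·
    have hOdd : {y ∈ Set.Icc x tp | Odd (rho y)} = {x, tp} := by
      ext y
      simp only [Set.mem_setOf_eq, Set.mem_insert_iff, Set.mem_singleton_iff]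
      constructor
      · rintro ⟨hy, hodd⟩
        rcases hchar y hy with rfl | rfl | ⟨-, hrn⟩
        · exact Or.inl rfl
        · exact Or.inr rfl
        · rw [hrn] at hodd
          exact absurd hodd (by simp [Nat.not_odd_iff_even.mpr hev])
      · rintro (rfl | rfl)
        · refine ⟨⟨le_refl y, htp y⟩, ?_⟩
          rw [hx]
          rcases hev with ⟨k, hk⟩
          exact ⟨k - 1, by omega⟩
        · refine ⟨⟨hxtp.le, le_refl y⟩, ?_⟩
          rw [hrtp]
          rcases hev with ⟨k, hk⟩
          exact ⟨k, by omega⟩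
    have hEven : {y ∈ Set.Icc x tp | Even (rho y)} = {z : γ | x < z ∧ rho z = n} := by
      ext y
      simp only [Set.mem_setOf_eq]
      constructor
      · rintro ⟨hy, heven⟩
        rcases hchar y hy with rfl | rfl | ⟨hlt, hrn⟩
        · exfalso
          rw [hx] at heven
          rcases heven with ⟨k, hk⟩
          rcases hev with ⟨l, hl⟩
          omega
        · exfalso
          rw [hrtp] at heven
          rcases heven with ⟨k, hk⟩
          rcases hev with ⟨l, hl⟩
          omega
        · exact ⟨hlt, hrn⟩
      · rintro ⟨hlt, hrn⟩
        refine ⟨⟨hlt.le, htp y⟩, by rw [hrn]; exact hev⟩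
    rw [hEven, hOdd] at hbal
    rw [hbal, Set.ncard_pair hxne]
  · -- n odd
    have hEven : {y ∈ Set.Icc x tp | Even (rho y)} = {x, tp} := by
      ext y
      simp only [Set.mem_setOf_eq, Set.mem_insert_iff, Set.mem_singleton_iff]
      constructor
      · rintro ⟨hy, heven⟩
        rcases hchar y hy with rfl | rfl | ⟨-, hrn⟩
        · exact Or.inl rfl
        · exact Or.inr rfl
        · rw [hrn] at heven
          exact absurd heven (by simp [Nat.not_even_iff_odd.mpr hod])
      · rintro (rfl | rfl)
        · refine ⟨⟨le_refl y, htp y⟩, ?_⟩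
          rw [hx]
          rcases hod with ⟨k, hk⟩
          exact ⟨k, by omega⟩
        · refine ⟨⟨hxtp.le, le_refl y⟩, ?_⟩
          rw [hrtp]
          rcases hod with ⟨k, hk⟩
          exact ⟨k + 1, by omega⟩
    have hOdd : {y ∈ Set.Icc x tp | Odd (rho y)} = {z : γ | x < z ∧ rho z = n} := by
      ext y
      simp only [Set.mem_setOf_eq]
      constructor
      · rintro ⟨hy, hodd⟩
        rcases hchar y hy with rfl | rfl | ⟨hlt, hrn⟩
        · exfalso
          rw [hx] at hodd
          rcases hodd with ⟨k, hk⟩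
          rcases hod with ⟨l, hl⟩
          omega
        · exfalso
          rw [hrtp] at hodd
          rcases hodd with ⟨k, hk⟩
          rcases hod with ⟨l, hl⟩
          omega
        · exact ⟨hlt, hrn⟩
      · rintro ⟨hlt, hrn⟩
        refine ⟨⟨hlt.le, htp y⟩, by rw [hrn]; exact hod⟩
    rw [hEven, hOdd] at hbal
    rw [← hbal, Set.ncard_pair hxne]

end QLemmas

/-- the local `cd`-index.  Let `P` be a near-Eulerian poset of rank
`n`.  Then `Ψ_P = ℓ^Ψ_P + Ψ_{∂P}·a` where `ℓ^Ψ_P := Ψ_{Σ̃P} - Ψ_{∂P}·(a+b)`; moreover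
`ℓ^Ψ_P` (as well as `Ψ_{Σ̃P}` and `Ψ_{∂P}`, i.e. `Φ_{Σ̃P}` and `Φ_{∂P}`) lies in the
subalgebra `K⟨c,d⟩`, so that as an element of `K⟨c,d⟩` it equals `Φ_{Σ̃P} - Φ_{∂P}·c`. -/
theorem localCdIndex
    (K : Type) [Field K] [CharZero K]
    (α : Type) [PartialOrder α] [Finite α] [OrderBot α] (n : ℕ)
    (h : IsNearEulerianOfRank α n) :
    psiS K (Set.univ : Set α) ⊥ n =
      (psiS K (Set.univ : Set (Semisusp α (boundary α n))) ⊥ n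
          - psiS K (boundary α n) ⊥ (n - 1) * lc K)
        + psiS K (boundary α n) ⊥ (n - 1) * la K ∧
    (psiS K (Set.univ : Set (Semisusp α (boundary α n))) ⊥ n
        - psiS K (boundary α n) ⊥ (n - 1) * lc K) ∈ cdSub K ∧
    psiS K (Set.univ : Set (Semisusp α (boundary α n))) ⊥ n ∈ cdSub K ∧
    psiS K (boundary α n) ⊥ (n - 1) ∈ cdSub K := by
  classical
  obtain ⟨Q, _instQ1, _instQ2, q, tp, hQE, htp, hrq, hqtp, ⟨eIso⟩⟩ := h
  obtain ⟨⟨bQ, hbQ⟩, -, hgr, HB⟩ := hQE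
  have hrtp : rho tp = n + 1 := rho_top_s5 hgr tp htp
  have hrbQ : rho bQ = 0 := rho_bot_eq_zero bQ hbQ
  set j : α → Q := fun a => (eIso a).val with hj_def
  have hjq : ∀ a, j a ≠ q := fun a => (eIso a).prop.1
  have hjtp : ∀ a, j a ≠ tp := fun a => (eIso a).prop.2
  have hjmono : ∀ a b : α, j a ≤ j b ↔ a ≤ b := by
    intro a b
    simp only [hj_def]
    exact Iff.trans Subtype.coe_le_coe eIso.le_iff_le
  have hjsurj : ∀ z : Q, z ≠ q → z ≠ tp → ∃ a, j a = z := by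
    intro z h1 h2
    refine ⟨eIso.symm ⟨z, h1, h2⟩, ?_⟩
    simp [hj_def]
  -- n = 0 is impossible
  rcases Nat.eq_zero_or_pos n with rfl | hn1
  · exfalso
    have hq0 : q = bQ := (rho_eq_zero_iff bQ hbQ q).mp hrq
    have hx1 : j ⊥ ≠ q := hjq ⊥
    have hx2 : j ⊥ ≠ tp := hjtp ⊥
    have hbx : bQ < j ⊥ := by
      apply lt_of_le_of_ne (hbQ _)
      intro hh
      exact hx1 (by rw [← hh, hq0])
    have h1 := rho_strict_mono hbx
    have h2 := rho_strict_mono (lt_of_le_of_ne (htp (j ⊥)) hx2)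
    rw [hrbQ] at h1
    rw [hrtp] at h2
    omega
  have hbq : bQ < q := by
    apply lt_of_le_of_ne (hbQ q)
    intro hh
    rw [← hh, hrbQ] at hrq
    omega
  have hqtp' : q < tp := lt_of_le_of_ne (htp q) hqtp
  have hIoi : ∀ z, q < z → z = tp := by
    intro z hz
    have h1 := rho_strict_mono hz
    rw [hrq] at h1
    by_contra hne
    have h2 := rho_strict_mono (lt_of_le_of_ne (htp z) hne)
    rw [hrtp] at h2
    omega
  have hnq : ∀ (z : Q) (a : α), z ≤ j a → z ≠ q ∧ z ≠ tp := by
    intro z a hz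
    constructor
    · rintro rfl
      rcases eq_or_lt_of_le hz with hh | hh
      · exact hjq a hh.symm
      · exact hjtp a (hIoi (j a) hh)
    · rintro rfl
      exact hjtp a (le_antisymm (htp (j a)) hz)
  have hj : IsLowerEmb j := by
    refine ⟨hjmono, ?_⟩
    intro z x hz
    obtain ⟨h1, h2⟩ := hnq z x hz
    exact hjsurj z h1 h2
  have hjbot : j ⊥ = bQ := by
    obtain ⟨a0, ha0⟩ := hjsurj bQ hbq.ne (hbq.trans hqtp').ne
    apply le_antisymm _ (hbQ _)
    rw [← ha0]
    exact (hjmono ⊥ a0).mpr bot_le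
  have hrho_j : ∀ a, rho (j a) = rho a := fun a => hj.rho_eq a
  have hjlt : ∀ a b : α, j a < j b ↔ a < b := by
    intro a b
    rw [lt_iff_le_not_ge, lt_iff_le_not_ge, hjmono, hjmono]
  -- cover transfer between α and Q
  have hcov_iff : ∀ x z : α, x ⋖ z ↔ j x ⋖ j z := by
    intro x z
    constructor
    · intro hcov
      refine ⟨(hjlt x z).mpr hcov.lt, ?_⟩
      intro c hc1 hc2
      have hcq : c ≠ q := by
        rintro rfl
        exact hjtp z (hIoi (j z) hc2)
      have hctp : c ≠ tp := by
        rintro rfl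
        exact absurd (lt_of_lt_of_le hc2 (htp (j z))) (lt_irrefl _)
      obtain ⟨w, rfl⟩ := hjsurj c hcq hctp
      exact hcov.2 ((hjlt x w).mp hc1) ((hjlt w z).mp hc2)
    · intro hcov
      exact ⟨(hjlt x z).mp hcov.lt,
        fun w hw1 hw2 => hcov.2 ((hjlt x w).mpr hw1) ((hjlt w z).mpr hw2)⟩
  -- covers of boundary-candidate elements
  have hncov : ∀ x : α, rho (j x) = n - 1 →
      {z : α | x ⋖ z}.ncard = (if j x < q then 1 else 2) := by
    intro x hx
    have h2 := middles_ncard HB hgr rfl tp htp hx hn1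
    have himg : j '' {z : α | x ⋖ z} = {z : Q | j x < z ∧ rho z = n} \ {q} := by
      ext z'
      simp only [Set.mem_image, Set.mem_diff, Set.mem_setOf_eq, Set.mem_singleton_iff]
      constructor
      · rintro ⟨z, hz, rfl⟩
        have hQcov : j x ⋖ j z := (hcov_iff x z).mp hz
        have := rho_cover hgr hQcov
        exact ⟨⟨hQcov.lt, by omega⟩, hjq z⟩
      · rintro ⟨⟨hlt, hrz⟩, hzq⟩
        have hztp : z' ≠ tp := by
          rintro rfl
          rw [hrtp] at hrz
          omega
        obtain ⟨z, rfl⟩ := hjsurj z' hzq hztp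
        refine ⟨z, ?_, rfl⟩
        show x ⋖ z
        rw [hcov_iff x z]
        have hchar := cover_char hgr rfl hx hn1
        rw [Set.ext_iff] at hchar
        exact (hchar (j z)).mpr ⟨hlt, hrz⟩
    have hinjon : Set.InjOn j {z : α | x ⋖ z} := fun u _ v _ huv => hj.inj huv
    have hcard : {z : α | x ⋖ z}.ncard
        = ({z : Q | j x < z ∧ rho z = n} \ {q}).ncard := by
      rw [← himg, Set.ncard_image_of_injOn hinjon]
    rw [hcard]
    by_cases hq : j x < q
    · rw [if_pos hq]
      have hqM : q ∈ {z : Q | j x < z ∧ rho z = n} := ⟨hq, hrq⟩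
      rw [Set.ncard_diff_singleton_of_mem hqM, h2]
    · rw [if_neg hq]
      have hqM : q ∉ {z : Q | j x < z ∧ rho z = n} := fun hh => hq hh.1
      rw [Set.diff_singleton_eq_self hqM, h2]
  -- the boundary characterization
  have hbchar : boundary α n = {y : α | j y < q} := by
    ext y
    unfold boundary boundaryIn
    simp only [Set.mem_univ, true_and, Set.mem_setOf_eq]
    constructor
    · rintro ⟨x, hx1, hx2, hyx⟩
      have hxj : rho (j x) = n - 1 := by rw [hrho_j]; exact hx1
      have hcnt := hncov x hxj
      rw [hx2] at hcnt
      by_cases hq : j x < q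
      · exact lt_of_le_of_lt ((hjmono y x).mpr hyx) hq
      · rw [if_neg hq] at hcnt
        omega
    · intro hyq
      obtain ⟨xQ, hxQ, hmax⟩ := Set.Finite.exists_maximalFor id
        {w : Q | j y ≤ w ∧ w < q} (Set.toFinite _) ⟨j y, le_refl _, hyq⟩
      obtain ⟨hyxQ, hxQq⟩ := hxQ
      have hcovQ : xQ ⋖ q := by
        refine ⟨hxQq, fun c hc1 hc2 => ?_⟩
        have hcS : c ∈ {w : Q | j y ≤ w ∧ w < q} := ⟨hyxQ.trans hc1.le, hc2⟩
        exact absurd (hmax hcS hc1.le) (not_le_of_gt hc1)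
      have hrxQ : rho xQ = n - 1 := by
        have := rho_cover hgr hcovQ
        rw [hrq] at this
        omega
      obtain ⟨x, rfl⟩ := hjsurj xQ hxQq.ne ((hxQq.trans hqtp').ne)
      refine ⟨x, ?_, ?_, (hjmono y x).mp hyxQ⟩
      · rw [← hrho_j x]
        exact hrxQ
      · have hcnt := hncov x hrxQ
        rw [if_pos hxQq] at hcnt
        exact hcnt
  have hmemB : ∀ y : α, y ∈ boundary α n ↔ j y < q := by
    intro y
    rw [hbchar]
    exact Iff.rfl
  -- the lower embedding of the semisuspension into Q
  set J : Semisusp α (boundary α n) → Q :=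
    fun w => w.toOpt.elim q j with hJ_def
  have hJmono : ∀ w w' : Semisusp α (boundary α n), J w ≤ J w' ↔ w ≤ w' := by
    intro w w'
    rcases w with ⟨_ | a⟩ <;> rcases w' with ⟨_ | a'⟩
    · exact ⟨fun _ => le_refl _, fun _ => le_refl _⟩
    · constructor
      · intro hqa
        exact absurd rfl (hnq q a' hqa).1
      · intro hw
        exact (hw : False).elim
    · show j a ≤ q ↔ (a = ⊥ ∨ ∃ s ∈ boundary α n, a ≤ s)
      constructor
      · intro hja
        have hlt : j a < q := lt_of_le_of_ne hja (hjq a)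
        exact Or.inr ⟨a, (hmemB a).mpr hlt, le_refl a⟩
      · rintro (rfl | ⟨s, hs, has⟩)
        · rw [hjbot]
          exact hbQ q
      
        · have hsq : j s < q := (hmemB s).mp hs
          exact (((hjmono a s).mpr has).trans hsq.le)
    · show j a ≤ j a' ↔ a ≤ a'
      exact hjmono a a'
  have hJ : IsLowerEmb J := by
    refine ⟨hJmono, ?_⟩
    intro z w hz
    rcases w with ⟨_ | a⟩
    · rcases eq_or_ne z q with rfl | hzq
      · exact ⟨Semisusp.q, rfl⟩
      · have hzq' : z < q := lt_of_le_of_ne hz hzq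
        have hztp : z ≠ tp := by
          rintro rfl
          exact absurd (lt_of_lt_of_le hzq' (htp q)) (lt_irrefl _)
        obtain ⟨a, rfl⟩ := hjsurj z hzq hztp
        exact ⟨Semisusp.incl a, rfl⟩
    · obtain ⟨h1, h2⟩ := hnq z a hz
      obtain ⟨a', rfl⟩ := hjsurj z h1 h2
      exact ⟨Semisusp.incl a', rfl⟩
  -- the three images
  have hJuniv : J '' Set.univ = Set.Ico bQ tp := by
    ext z
    simp only [Set.image_univ, Set.mem_range, Set.mem_Ico]
    constructor
    · rintro ⟨w, rfl⟩
      refine ⟨hbQ _, ?_⟩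
      rcases w with ⟨_ | a⟩
      · exact hqtp'
      · exact lt_of_le_of_ne (htp _) (hjtp a)
    · rintro ⟨-, hztp⟩
      rcases eq_or_ne z q with rfl | hzq
      · exact ⟨Semisusp.q, rfl⟩
      · obtain ⟨a, rfl⟩ := hjsurj z hzq hztp.ne
        exact ⟨Semisusp.incl a, rfl⟩
  have hjuniv : j '' Set.univ = Set.Ico bQ tp \ {q} := by
    ext z
    simp only [Set.image_univ, Set.mem_range, Set.mem_diff, Set.mem_Ico,
      Set.mem_singleton_iff]
    constructor
    · rintro ⟨a, rfl⟩
      exact ⟨⟨hbQ _, lt_of_le_of_ne (htp _) (hjtp a)⟩, hjq a⟩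
    · rintro ⟨⟨-, hztp⟩, hzq⟩
      exact hjsurj z hzq hztp.ne
  have hjB : j '' boundary α n = Set.Ico bQ q := by
    ext z
    simp only [Set.mem_image, Set.mem_Ico]
    constructor
    · rintro ⟨y, hy, rfl⟩
      exact ⟨hbQ _, (hmemB y).mp hy⟩
    · rintro ⟨-, hzq⟩
      have hztp : z ≠ tp := by
        rintro rfl
        exact absurd (hzq.trans hqtp') (lt_irrefl _)
      obtain ⟨y, rfl⟩ := hjsurj z hzq.ne hztp
      exact ⟨y, (hmemB y).mpr hzq, rfl⟩
  -- the transfers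
  have hPsiA : psiS K (Set.univ : Set α) ⊥ n = psiS K (Set.Ico bQ tp \ {q}) bQ n := by
    have := hj.psiS_eq K Set.univ ⊥ n
    rw [hjuniv, hjbot] at this
    exact this.symm
  have hPsiS : psiS K (Set.univ : Set (Semisusp α (boundary α n))) ⊥ n
      = psiS K (Set.Ico bQ tp) bQ n := by
    have := hJ.psiS_eq K Set.univ ⊥ n
    rw [hJuniv] at this
    have hJbot : J (⊥ : Semisusp α (boundary α n)) = bQ := by
      show j ⊥ = bQ
      exact hjbot
    rw [hJbot] at this
    exact this.symm
  have hPsiB : psiS K (boundary α n) ⊥ (n - 1)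
      = psiS K (Set.Ico bQ q) bQ (n - 1) := by
    have := hj.psiS_eq K (boundary α n) ⊥ (n - 1)
    rw [hjB, hjbot] at this
    exact this.symm
  -- the cd-index memberships from the main theorem
  have hbk3 : psiS K (Set.Ico bQ tp) bQ n ∈ cdSub K := by
    have := bk_aux K bQ hbQ HB (rho tp) tp le_rfl
    rw [hrtp, Nat.add_sub_cancel] at this
    exact this
  have hbk4 : psiS K (Set.Ico bQ q) bQ (n - 1) ∈ cdSub K := by
    have := bk_aux K bQ hbQ HB (rho q) q le_rfl
    rw [hrq] at this
    exact this
  have hsplit := psiS_split K bQ q tp hbQ htp hIoi hrq hn1 hqtp' hrtp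
  refine ⟨?_, ?_, ?_, ?_⟩
  · rw [hPsiA, hPsiS, hPsiB, hsplit]
    simp only [lc]
    noncomm_ring
  · rw [hPsiS, hPsiB]
    exact sub_mem hbk3 (mul_mem hbk4 (lc_mem_cdSub K))
  · rw [hPsiS]
    exact hbk3
  · rw [hPsiB]
    exact hbk4

end CDIndex
end
end
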